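/- arXiv:1801.07854 — 4 statements merged into one kernel-verified Lean document; each statement's English description precedes it below -/
import Mathlib

section
/- Let k ≥ 3 and n ≥ 1 be integers. If G is a balanced k-partite graph of order p = kn with at least ((k² − k)n² − 2n(k − 1) + 4)/2 edges, then G is hamiltonian. (Note that ((k² − k)n² − 2n(k − 1) + 4)/2 equals the number of edges of the complete balanced k-partite graph K_k(n) minus ((k − 1)n − 2).) -/
open SimpleGraph

namespace BKPH

set_option linter.unusedSectionVars false

open List

variable {V : Type*} [DecidableEq V]

/-- A "Hamilton cycle list": a cyclic listing of all vertices along graph edges. -/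
def HCL (G : SimpleGraph V) (l : List V) : Prop :=
  l.Nodup ∧ (∀ v, v ∈ l) ∧ 3 ≤ l.length ∧ l.IsChain G.Adj ∧
    ∀ a ∈ l.getLast?, ∀ b ∈ l.head?, G.Adj a b

variable {G : SimpleGraph V}

/-- Build a walk along a list of successively adjacent vertices. -/
def listWalk (G : SimpleGraph V) :
    ∀ (l : List V) (hne : l ≠ []), l.IsChain G.Adj → G.Walk (l.head hne) (l.getLast hne)
  | [a], _, _ => Walk.nil
  | a :: b :: t, _, h =>
      (Walk.cons (List.isChain_cons_cons.mp h).1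
        (listWalk G (b :: t) (by simp) (List.isChain_cons_cons.mp h).2)).copy rfl
        (List.getLast_cons (by simp)).symm

lemma support_listWalk : ∀ (l : List V) (hne : l ≠ []) (h : l.IsChain G.Adj),
    (listWalk G l hne h).support = l
  | [a], _, _ => rfl
  | a :: b :: t, _, h => by
      erw [listWalk, Walk.support_copy, Walk.support_cons,
        support_listWalk (b :: t) (by simp) (List.isChain_cons_cons.mp h).2]

lemma closing_not_mem_edges : ∀ (l : List V) (hne : l ≠ []) (h : l.IsChain G.Adj)
    (_ : l.Nodup) (_ : 3 ≤ l.length),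
    s(l.getLast hne, l.head hne) ∉ (listWalk G l hne h).edges
  | [_], _, _, _, hlen => by simp at hlen
  | [_, _], _, _, _, hlen => by simp at hlen
  | a :: b :: c :: t, _, h, hn, _ => by
    erw [listWalk, Walk.edges_copy, Walk.edges_cons]
    intro hmem
    have hz : (a :: b :: c :: t).getLast (by simp) = (c :: t).getLast (by simp) := by
      rw [List.getLast_cons (by simp), List.getLast_cons (by simp)]
    have hzmem : (a :: b :: c :: t).getLast (by simp) ∈ c :: t := by
      rw [hz]; exact List.getLast_mem _
    have hanotin : a ∉ b :: c :: t := (List.nodup_cons.mp hn).1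
    have hbnotin : b ∉ c :: t := (List.nodup_cons.mp (List.nodup_cons.mp hn).2).1
    rcases List.mem_cons.mp hmem with heq | hmem'
    · rw [Sym2.eq_iff] at heq
      rcases heq with ⟨h1, h2⟩ | ⟨h1, _⟩
      · exact hanotin (h1 ▸ List.mem_cons_of_mem _ hzmem)
      · exact hbnotin (h1 ▸ hzmem)
    · have : a ∈ (listWalk G (b :: c :: t) (by simp) (List.isChain_cons_cons.mp h).2).support :=
        Walk.snd_mem_support_of_mem_edges _ hmem'
      rw [support_listWalk] at this
      exact hanotin this

lemma HCL.isHamiltonian [Fintype V] {l : List V} (hl : HCL G l) : G.IsHamiltonian := by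
  obtain ⟨hn, hmem, hlen, hch, hwrap⟩ := hl
  have hne : l ≠ [] := by intro h; rw [h] at hlen; simp at hlen
  have hsupp : (listWalk G l hne hch).support = l := support_listWalk l hne hch
  have hadj : G.Adj (l.getLast hne) (l.head hne) :=
    hwrap _ (List.getLast?_eq_getLast hne ▸ rfl) _ (List.head?_eq_head hne ▸ rfl)
  have hpath : (listWalk G l hne hch).IsPath := Walk.IsPath.mk' (by rw [hsupp]; exact hn)
  have hc : (Walk.cons hadj (listWalk G l hne hch)).IsCycle :=
    SimpleGraph.Path.cons_isCycle ⟨_, hpath⟩ hadj (closing_not_mem_edges l hne hch hn hlen)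
  have hhc : (Walk.cons hadj (listWalk G l hne hch)).IsHamiltonianCycle := by
    rw [Walk.isHamiltonianCycle_iff_isCycle_and_support_count_tail_eq_one]
    refine ⟨hc, fun v => ?_⟩
    rw [Walk.support_cons, List.tail_cons, hsupp]
    exact List.count_eq_one_of_mem hn (hmem v)
  exact fun _ => ⟨_, _, hhc⟩

lemma exists_hcl_of_isHamiltonian [Fintype V] (hG : G.IsHamiltonian)
    (hcard : 3 ≤ Fintype.card V) : ∃ l, HCL G l := by
  obtain ⟨a, p, hp⟩ := hG (by omega)
  have hcount : ∀ v, p.support.tail.count v = 1 :=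
    (Walk.isHamiltonianCycle_iff_isCycle_and_support_count_tail_eq_one.mp hp).2
  set t := p.support.tail with ht
  have htn : t.Nodup := List.nodup_iff_count_le_one.mpr (fun v => le_of_eq (hcount v))
  have htm : ∀ v, v ∈ t := fun v => by
    rw [← List.count_pos_iff, hcount]; norm_num
  have htne : t ≠ [] := by
    intro h; have := htm a; rw [h] at this; simp at this
  have hlast : t.getLast htne = a := by
    have h1 : p.support.getLast? = some a := by
      rw [List.getLast?_eq_getLast p.support_ne_nil, Walk.getLast_support]
    rw [Walk.support_eq_cons p, ← ht, List.getLast?_eq_getLast (by simp),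
      List.getLast_cons htne] at h1
    exact Option.some_injective _ h1
  have htsplit : t.dropLast ++ [a] = t := by
    conv_rhs => rw [← List.dropLast_append_getLast htne, hlast]
  have hsupp : p.support = (a :: t.dropLast) ++ [a] := by
    rw [Walk.support_eq_cons p, ← ht, List.cons_append, htsplit]
  refine ⟨a :: t.dropLast, ?_, ?_, ?_, ?_, ?_⟩
  · rw [List.nodup_cons]
    constructor
    · intro hmem
      have h1 := hcount a
      rw [← htsplit, List.count_append] at h1
      have h2 : List.count a [a] = 1 := by simp
      have h3 := List.count_pos_iff.mpr hmem
      omega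
    · exact List.Nodup.sublist (List.dropLast_sublist t) htn
  · intro v
    rcases eq_or_ne v a with rfl | hva
    · exact List.mem_cons_self
    · have := htm v
      rw [← htsplit, List.mem_append] at this
      rcases this with h | h
      · exact List.mem_cons_of_mem _ h
      · simp at h; exact absurd h hva
  · have hplen : p.length = Fintype.card V := hp.length_eq
    have h2 : p.support.length = p.length + 1 := Walk.length_support p
    rw [hsupp] at h2
    simp only [List.length_append, List.length_cons, List.length_singleton, List.length_nil] at h2 ⊢
    omega
  · exact Walk.isChain_adj_support p |>.prefix ⟨[a], hsupp.symm⟩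
  · intro x hx y hy
    have hchain : (a :: t.dropLast ++ [a] : List V).IsChain G.Adj := by
      rw [← hsupp]; exact Walk.isChain_adj_support p
    rw [List.isChain_append] at hchain
    rw [List.head?_cons] at hy
    have := hchain.2.2 x hx a (by simp)
    rwa [← Option.some_injective _ hy]


lemma HCL.rotate_one {l : List V} (hl : HCL G l) : HCL G (l.rotate 1) := by
  obtain ⟨hn, hmem, hlen, hch, hwrap⟩ := hl
  match l, hlen with
  | a :: b :: t, _ =>
    have hrot : (a :: b :: t).rotate 1 = (b :: t) ++ [a] := by
      rw [List.rotate_cons_succ, List.rotate_zero]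
    refine ⟨List.nodup_rotate.mpr hn, fun v => List.mem_rotate.mpr (hmem v), ?_, ?_, ?_⟩
    · rwa [List.length_rotate]
    · rw [hrot, List.isChain_append]
      refine ⟨hch.tail, List.isChain_singleton a, ?_⟩
      intro x hx y hy
      rw [List.head?_cons, Option.mem_def, Option.some_inj] at hy
      subst hy
      apply hwrap x _ a (by simp)
      rwa [List.getLast?_cons_cons]
    · intro x hx y hy
      rw [hrot, List.getLast?_append] at hx
      simp only [List.getLast?_singleton, Option.or_some, Option.some_or, Option.mem_def,
        Option.some_inj] at hx
      subst hx
      rw [hrot] at hy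
      have : ((b :: t) ++ [a]).head? = some b := by rw [List.cons_append, List.head?_cons]
      rw [this, Option.mem_def, Option.some_inj] at hy
      subst hy
      exact (List.isChain_cons_cons.mp hch).1

lemma HCL.rotate {l : List V} (hl : HCL G l) (j : ℕ) : HCL G (l.rotate j) := by
  induction j with
  | zero => simpa using hl
  | succ m ih =>
    have := ih.rotate_one
    rwa [List.rotate_rotate] at this

lemma hcl_of_complete [Fintype V] {H : SimpleGraph V} (hcard : 3 ≤ Fintype.card V)
    (hcomp : ∀ u v : V, u ≠ v → H.Adj u v) : ∃ l, HCL H l := by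
  refine ⟨Finset.univ.toList, Finset.nodup_toList _, fun v => by simp [Finset.mem_toList], ?_, ?_, ?_⟩
  · rw [Finset.length_toList, Finset.card_univ]; exact hcard
  · exact ((Finset.nodup_toList _).imp (fun h => hcomp _ _ h)).isChain
  · intro x hx y hy
    have hlen : 2 ≤ (Finset.univ : Finset V).toList.length := by
      rw [Finset.length_toList, Finset.card_univ]; omega
    match hl : (Finset.univ : Finset V).toList, hlen with
    | a :: b :: t, _ =>
      have hn := Finset.nodup_toList (Finset.univ : Finset V)
      rw [hl] at hn
      rw [hl, List.head?_cons, Option.mem_def, Option.some_inj] at hy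
      subst hy
      rw [hl, List.getLast?_cons_cons, List.getLast?_eq_getLast (by simp),
        Option.mem_def, Option.some_inj] at hx
      subst hx
      apply hcomp
      intro heq
      have hmem : (b :: t).getLast (by simp) ∈ b :: t := List.getLast_mem _
      rw [heq] at hmem
      exact (List.nodup_cons.mp hn).1 hmem


lemma crossing [Fintype V] {H : SimpleGraph V} [DecidableRel H.Adj] {P : List V}
    (hn : P.Nodup) (hmem : ∀ x, x ∈ P) (hch : P.IsChain H.Adj) {u v : V}
    (hu : P.head? = some u) (hv : P.getLast? = some v)
    (hdeg : Fintype.card V ≤ H.degree u + H.degree v) (hlen : 3 ≤ P.length) :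
    ∃ l, HCL H l := by
  classical
  have hPlen : P.length = Fintype.card V := by
    rw [← List.toFinset_card_of_nodup hn, ← Finset.card_univ]
    congr 1
    exact Finset.eq_univ_iff_forall.mpr (fun x => List.mem_toFinset.mpr (hmem x))
  set p := P.length with hp
  have hu0 : P[0]? = some u := by rwa [← List.head?_eq_getElem?]
  have hvl : P[p-1]? = some v := by rwa [← List.getLast?_eq_getElem?]
  have hidx : ∀ w, P.idxOf w < p := fun w => List.idxOf_lt_length_iff.mpr (hmem w)
  have hPidx : ∀ w, P[P.idxOf w]? = some w := fun w => by
    rw [List.getElem?_eq_getElem (hidx w), List.getElem_idxOf]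
  have hinj : ∀ w w', P.idxOf w = P.idxOf w' → w = w' := by
    intro w w' h
    have h1 := hPidx w
    rw [h, hPidx w'] at h1
    exact (Option.some_inj.mp h1).symm
  have hSnbr : ∀ w, H.Adj u w → 1 ≤ P.idxOf w := by
    intro w hw
    by_contra hcon
    have h0 : P.idxOf w = 0 := by omega
    have := hPidx w
    rw [h0, hu0] at this
    exact H.irrefl (Option.some_inj.mp this ▸ hw)
  have hTnbr : ∀ w, H.Adj v w → P.idxOf w < p - 1 := by
    intro w hw
    have h1 := hidx w
    rcases Nat.lt_or_ge (P.idxOf w) (p-1) with h | h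
    · exact h
    · exfalso
      have h0 : P.idxOf w = p - 1 := by omega
      have := hPidx w
      rw [h0, hvl] at this
      exact H.irrefl (Option.some_inj.mp this ▸ hw)
  set S : Finset ℕ := (H.neighborFinset u).image (fun w => P.idxOf w - 1) with hS
  set T : Finset ℕ := (H.neighborFinset v).image (fun w => P.idxOf w) with hT
  have hScard : S.card = H.degree u := by
    rw [hS, Finset.card_image_of_injOn, SimpleGraph.card_neighborFinset_eq_degree]
    intro w hw w' hw' h
    dsimp only at h
    apply hinj
    have h1 := hSnbr w ((H.mem_neighborFinset u w).mp hw)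
    have h2 := hSnbr w' ((H.mem_neighborFinset u w').mp hw')
    omega
  have hTcard : T.card = H.degree v := by
    rw [hT, Finset.card_image_of_injOn, SimpleGraph.card_neighborFinset_eq_degree]
    exact fun w _ w' _ h => hinj _ _ h
  have hSsub : S ⊆ Finset.range (p - 1) := by
    intro i hi
    rw [hS, Finset.mem_image] at hi
    obtain ⟨w, hw, rfl⟩ := hi
    rw [Finset.mem_range]
    have h1 := hidx w
    have h2 := hSnbr w ((H.mem_neighborFinset u w).mp hw)
    omega
  have hTsub : T ⊆ Finset.range (p - 1) := by
    intro i hi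
    rw [hT, Finset.mem_image] at hi
    obtain ⟨w, hw, rfl⟩ := hi
    rw [Finset.mem_range]
    exact hTnbr w ((H.mem_neighborFinset v w).mp hw)
  have hST : (S ∩ T).Nonempty := by
    rw [← Finset.card_pos]
    have h1 := Finset.card_inter_add_card_union S T
    have h2 : (S ∪ T).card ≤ p - 1 := by
      calc (S ∪ T).card ≤ (Finset.range (p-1)).card :=
            Finset.card_le_card (Finset.union_subset hSsub hTsub)
        _ = p - 1 := Finset.card_range _
    omega
  obtain ⟨i, hiST⟩ := hST
  rw [Finset.mem_inter] at hiST
  have hip : i < p - 1 := Finset.mem_range.mp (hSsub hiST.1)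
  obtain ⟨w1, hw1, hw1i⟩ := Finset.mem_image.mp hiST.1
  obtain ⟨w2, hw2, hw2i⟩ := Finset.mem_image.mp hiST.2
  rw [H.mem_neighborFinset] at hw1 hw2
  have hw1pos : P.idxOf w1 = i + 1 := by
    have := hSnbr w1 hw1; omega
  have hPi1 : P[i+1]? = some w1 := by rw [← hw1pos]; exact hPidx w1
  have hPi : P[i]? = some w2 := by rw [← hw2i]; exact hPidx w2
  -- the surgered cycle list
  refine ⟨P.take (i+1) ++ (P.drop (i+1)).reverse, ?_⟩
  have hperm : (P.take (i+1) ++ (P.drop (i+1)).reverse).Perm P := by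
    have h := List.Perm.append_left (P.take (i+1)) (List.reverse_perm (P.drop (i+1)))
    rwa [List.take_append_drop] at h
  have htlen : (P.take (i+1)).length = i + 1 := by
    rw [List.length_take]; omega
  have hTake_last : (P.take (i+1)).getLast? = some w2 := by
    rw [List.getLast?_eq_getElem?, htlen, List.getElem?_take, if_pos (by omega : i + 1 - 1 < i + 1)]
    have : i + 1 - 1 = i := by omega
    rw [this, hPi]
  have hTake_head : (P.take (i+1)).head? = some u := by
    rw [List.head?_eq_getElem?, List.getElem?_take, if_pos (by omega : 0 < i + 1), hu0]
  have hDrop_head : (P.drop (i+1)).head? = some w1 := by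
    rw [List.head?_eq_getElem?, List.getElem?_drop]
    rwa [Nat.add_zero]
  have hDrop_last : (P.drop (i+1)).getLast? = some v := by
    rw [List.getLast?_eq_getElem?, List.length_drop, List.getElem?_drop]
    have : i + 1 + (p - (i+1) - 1) = p - 1 := by omega
    rw [this, hvl]
  refine ⟨hperm.nodup_iff.mpr hn, fun x => hperm.mem_iff.mpr (hmem x), ?_, ?_, ?_⟩
  · rw [List.length_append, htlen, List.length_reverse, List.length_drop]
    omega
  · rw [List.isChain_append]
    refine ⟨hch.prefix (List.take_prefix _ _), ?_, ?_⟩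
    · rw [List.isChain_reverse]
      exact ((hch.drop (i+1)).imp (fun {a b} hab => hab.symm) : _)
    · intro x hx y hy
      rw [hTake_last, Option.mem_def, Option.some_inj] at hx
      rw [List.head?_reverse, hDrop_last, Option.mem_def, Option.some_inj] at hy
      subst hx; subst hy
      exact hw2.symm
  · intro x hx y hy
    rw [List.getLast?_append, List.getLast?_reverse, hDrop_head] at hx
    simp only [Option.or, Option.mem_def, Option.some_inj] at hx
    rw [List.head?_append, hTake_head] at hy
    simp only [Option.or, Option.mem_def, Option.some_inj] at hy
    subst hx; subst hy
    exact hw1.symm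


lemma isHamiltonian_of_sup_edge [Fintype V] {H : SimpleGraph V} [DecidableRel H.Adj]
    {u v : V} (hcard : 3 ≤ Fintype.card V)
    (hdeg : Fintype.card V ≤ H.degree u + H.degree v)
    (hham : (H ⊔ SimpleGraph.edge u v).IsHamiltonian) : H.IsHamiltonian := by
  classical
  obtain ⟨l, hl⟩ := exists_hcl_of_isHamiltonian hham hcard
  obtain ⟨hn, hmem, hlen, hch, hwrap⟩ := hl
  by_cases hgood : (∀ (i : ℕ) (h : i + 1 < l.length), H.Adj (l[i]'(by omega)) (l[i+1]'h))
      ∧ (∀ x ∈ l.getLast?, ∀ y ∈ l.head?, H.Adj x y)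
  · refine HCL.isHamiltonian ⟨hn, hmem, hlen, ?_, hgood.2⟩
    rw [List.isChain_iff_getElem]
    intro i h
    exact hgood.1 i (by omega)
  · have key : ∃ l' : List V, l'.Nodup ∧ (∀ x, x ∈ l') ∧ 3 ≤ l'.length ∧
        l'.IsChain (H ⊔ SimpleGraph.edge u v).Adj ∧
        (∀ x ∈ l'.getLast?, ∀ y ∈ l'.head?, (H ⊔ SimpleGraph.edge u v).Adj x y) ∧
        (∀ x ∈ l'.getLast?, ∀ y ∈ l'.head?, ¬ H.Adj x y) := by
      rw [not_and_or] at hgood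
      rcases hgood with hbad | hbad
      · push_neg at hbad
        obtain ⟨i, hi, hbadi⟩ := hbad
        obtain ⟨hn', hmem', hlen', hch', hwrap'⟩ :=
          HCL.rotate (G := H ⊔ SimpleGraph.edge u v) ⟨hn, hmem, hlen, hch, hwrap⟩ (i+1)
        have heq : l.rotate (i+1) = l.drop (i+1) ++ l.take (i+1) :=
          List.rotate_eq_drop_append_take (by omega)
        have htlen : (l.take (i+1)).length = i + 1 := by
          rw [List.length_take]; omega
        have htake : (l.take (i+1)).getLast? = some (l[i]'(Nat.lt_of_succ_lt hi)) := by
          rw [List.getLast?_eq_getElem?, htlen, List.getElem?_take,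
            if_pos (by omega : i + 1 - 1 < i + 1)]
          have h2 : i + 1 - 1 = i := by omega
          rw [h2, List.getElem?_eq_getElem (by omega : i < l.length)]
        have hlast' : (l.rotate (i+1)).getLast? = some (l[i]'(Nat.lt_of_succ_lt hi)) := by
          rw [heq, List.getLast?_append, htake]
          rfl
        have hhead' : (l.rotate (i+1)).head? = some (l[i+1]'hi) := by
          rw [heq, List.head?_append, List.head?_drop,
            List.getElem?_eq_getElem (by omega : i + 1 < l.length)]
          rfl
        refine ⟨l.rotate (i+1), hn', hmem', hlen', hch', hwrap', ?_⟩
        intro x hx y hy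
        rw [hlast', Option.mem_def, Option.some_inj] at hx
        rw [hhead', Option.mem_def, Option.some_inj] at hy
        subst hx; subst hy
        exact hbadi
      · push_neg at hbad
        obtain ⟨x, hx, y, hy, hxy⟩ := hbad
        refine ⟨l, hn, hmem, hlen, hch, hwrap, ?_⟩
        intro x' hx' y' hy'
        rw [Option.mem_def] at hx hx' hy hy'
        rw [hx] at hx'
        rw [hy] at hy'
        rw [← Option.some_inj.mp hx', ← Option.some_inj.mp hy']
        exact hxy
    obtain ⟨l', hn', hmem', hlen', hch', hwrap', hbadw⟩ := key
    have hne' : l' ≠ [] := by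
      intro h; rw [h] at hlen'; simp at hlen'
    set x0 := l'.getLast hne' with hx0
    set y0 := l'.head hne' with hy0
    have hlast' : l'.getLast? = some x0 := List.getLast?_eq_getLast _
    have hhead' : l'.head? = some y0 := List.head?_eq_head _
    have hsupadj : (H ⊔ SimpleGraph.edge u v).Adj x0 y0 :=
      hwrap' _ (by rw [hlast']; rfl) _ (by rw [hhead']; rfl)
    have hnadj : ¬ H.Adj x0 y0 := hbadw _ (by rw [hlast']; rfl) _ (by rw [hhead']; rfl)
    have hedge : (SimpleGraph.edge u v).Adj x0 y0 := by
      rcases (SimpleGraph.sup_adj _ _ _ _).mp hsupadj with h | h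
      · exact absurd h hnadj
      · exact h
    rw [SimpleGraph.edge_adj] at hedge
    -- index facts
    have hl'len3 : 3 ≤ l'.length := hlen'
    have hx0i : l'[l'.length - 1]? = some x0 := by
      rw [← List.getLast?_eq_getElem?]; exact hlast'
    have hy0i : l'[0]? = some y0 := by
      rw [← List.head?_eq_getElem?]; exact hhead'
    have hx0e : l'[l'.length - 1]'(by omega) = x0 := by
      have := hx0i
      rw [List.getElem?_eq_getElem (by omega : l'.length - 1 < l'.length)] at this
      exact Option.some_inj.mp this
    have hy0e : l'[0]'(by omega) = y0 := by
      have := hy0i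
      rw [List.getElem?_eq_getElem (by omega : 0 < l'.length)] at this
      exact Option.some_inj.mp this
    have hchH : l'.IsChain H.Adj := by
      rw [List.isChain_iff_getElem]
      intro i h
      have hadj' : (H ⊔ SimpleGraph.edge u v).Adj (l'[i]'(by omega)) (l'[i+1]'(by omega)) := by
        have := List.isChain_iff_getElem.mp hch' i h
        simpa using this
      rcases (SimpleGraph.sup_adj _ _ _ _).mp hadj' with hgood | hbad2
      · exact hgood
      · exfalso
        rw [SimpleGraph.edge_adj] at hbad2
        have hii : i < l'.length - 1 := by omega
        have hinj := fun (a b : ℕ) (ha : a < l'.length) (hb : b < l'.length) =>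
          (List.Nodup.getElem_inj_iff hn' (hi := ha) (hj := hb))
        rcases hbad2.1 with ⟨hu1, hv1⟩ | ⟨hu1, hv1⟩ <;>
          rcases hedge.1 with ⟨hu2, hv2⟩ | ⟨hu2, hv2⟩
        · have e1 : l'[i]'(by omega) = l'[l'.length - 1]'(by omega) := by
            rw [hx0e, hu1, hu2]
          have f1 := (hinj _ _ (by omega) (by omega)).mp e1
          omega
        · have e1 : l'[i]'(by omega) = l'[0]'(by omega) := by
            rw [hy0e, hu1, hv2]
          have e2 : l'[i+1]'(by omega) = l'[l'.length - 1]'(by omega) := by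
            rw [hx0e, hv1, hu2]
          have f1 := (hinj _ _ (by omega) (by omega)).mp e1
          have f2 := (hinj _ _ (by omega) (by omega)).mp e2
          omega
        · have e1 : l'[i]'(by omega) = l'[0]'(by omega) := by
            rw [hy0e, hu1, hv2]
          have e2 : l'[i+1]'(by omega) = l'[l'.length - 1]'(by omega) := by
            rw [hx0e, hv1, hu2]
          have f1 := (hinj _ _ (by omega) (by omega)).mp e1
          have f2 := (hinj _ _ (by omega) (by omega)).mp e2
          omega
        · have e1 : l'[i]'(by omega) = l'[l'.length - 1]'(by omega) := by
            rw [hx0e, hu1, hu2]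
          have f1 := (hinj _ _ (by omega) (by omega)).mp e1
          omega
    have hdeg' : Fintype.card V ≤ H.degree y0 + H.degree x0 := by
      rcases hedge.1 with ⟨hu2, hv2⟩ | ⟨hu2, hv2⟩
      · rw [hu2, hv2]; omega
      · rw [hu2, hv2]; omega
    obtain ⟨l'', hl''⟩ := crossing hn' hmem' hchH hhead' hlast' hdeg' hlen'
    exact hl''.isHamiltonian


lemma isHamiltonian_of_stuck_free [Fintype V] (G0 : SimpleGraph V) (hcard : 3 ≤ Fintype.card V)
    (hstep : ∀ H : SimpleGraph V, G0 ≤ H → (∃ x y : V, x ≠ y ∧ ¬H.Adj x y) →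
      ∃ u v : V, u ≠ v ∧ ¬H.Adj u v ∧
        Fintype.card V ≤ (H.neighborSet u).ncard + (H.neighborSet v).ncard) :
    G0.IsHamiltonian := by
  classical
  have hdc : ∀ (H : SimpleGraph V) (inst : DecidableRel H.Adj) (w : V),
      (H.neighborSet w).ncard = H.degree w := fun H inst w => by
    rw [Set.ncard_eq_toFinset_card', Set.toFinset_card, SimpleGraph.card_neighborSet_eq_degree]
  suffices h : ∀ (m : ℕ) (H : SimpleGraph V), (Hᶜ).edgeSet.ncard ≤ m → G0 ≤ H →
      H.IsHamiltonian by
    exact h (G0ᶜ).edgeSet.ncard G0 le_rfl le_rfl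
  intro m
  induction m with
  | zero =>
    intro H hle _
    have hcomp : ∀ x y : V, x ≠ y → H.Adj x y := by
      intro x y hxy
      by_contra hnadj
      have hmm : s(x, y) ∈ (Hᶜ).edgeSet := by
        rw [SimpleGraph.mem_edgeSet, SimpleGraph.compl_adj]
        exact ⟨hxy, hnadj⟩
      have h0 : (Hᶜ).edgeSet.ncard = 0 := by omega
      rw [Set.ncard_eq_zero (Set.toFinite _)] at h0
      rw [h0] at hmm
      exact hmm
    obtain ⟨l, hl⟩ := hcl_of_complete hcard hcomp
    exact hl.isHamiltonian
  | succ m ih =>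
    intro H hle hsub
    by_cases hcomp : ∀ x y : V, x ≠ y → H.Adj x y
    · obtain ⟨l, hl⟩ := hcl_of_complete hcard hcomp
      exact hl.isHamiltonian
    · push_neg at hcomp
      obtain ⟨u, v, hne, hnadj, hdeg⟩ := hstep H hsub hcomp
      have hcsub : ((H ⊔ SimpleGraph.edge u v)ᶜ).edgeSet ⊆ (Hᶜ).edgeSet :=
        SimpleGraph.edgeSet_mono (compl_le_compl le_sup_left)
      have hmem : s(u, v) ∈ (Hᶜ).edgeSet := by
        rw [SimpleGraph.mem_edgeSet, SimpleGraph.compl_adj]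
        exact ⟨hne, hnadj⟩
      have hnmem : s(u, v) ∉ ((H ⊔ SimpleGraph.edge u v)ᶜ).edgeSet := by
        rw [SimpleGraph.mem_edgeSet, SimpleGraph.compl_adj]
        intro hcon
        exact hcon.2 (Or.inr (by rw [SimpleGraph.edge_adj]; exact ⟨Or.inl ⟨rfl, rfl⟩, hne⟩))
      have hlt : ((H ⊔ SimpleGraph.edge u v)ᶜ).edgeSet.ncard < (Hᶜ).edgeSet.ncard := by
        apply Set.ncard_lt_ncard _ (Set.toFinite _)
        exact ⟨hcsub, fun hcon => hnmem (hcon hmem)⟩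
      have hham' := ih (H ⊔ SimpleGraph.edge u v) (by omega) (le_trans hsub le_sup_left)
      refine isHamiltonian_of_sup_edge hcard ?_ hham'
      rw [← hdc H _ u, ← hdc H _ v]
      exact hdeg


section Kpartite

lemma card_VT (k n : ℕ) : Fintype.card ((_ : Fin k) × Fin n) = k * n := by
  rw [Fintype.card_sigma]
  simp [Finset.sum_const, Finset.card_univ]

lemma fiber_card (k n : ℕ) (w : (_ : Fin k) × Fin n) :
    (Finset.univ.filter (fun x : (_ : Fin k) × Fin n => x.1 = w.1)).card = n := by
  classical
  have himg : Finset.univ.filter (fun x : (_ : Fin k) × Fin n => x.1 = w.1) =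
      Finset.univ.image (fun a : Fin n => (⟨w.1, a⟩ : (_ : Fin k) × Fin n)) := by
    ext x
    simp only [Finset.mem_filter, Finset.mem_univ, true_and, Finset.mem_image]
    constructor
    · intro h
      exact ⟨x.2, Sigma.ext h.symm HEq.rfl⟩
    · rintro ⟨a, rfl⟩
      rfl
  rw [himg, Finset.card_image_of_injective _ ?_, Finset.card_univ, Fintype.card_fin]
  intro a b hab
  have := (Sigma.mk.inj_iff.mp hab).2
  exact eq_of_heq this

lemma degree_K (k n : ℕ)
    [DecidableRel (completeMultipartiteGraph (fun _ : Fin k => Fin n)).Adj]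
    (w : (_ : Fin k) × Fin n) :
    (completeMultipartiteGraph (fun _ : Fin k => Fin n)).degree w + n = k * n := by
  classical
  have h1 : (completeMultipartiteGraph (fun _ : Fin k => Fin n)).neighborFinset w =
      Finset.univ.filter (fun x : (_ : Fin k) × Fin n => ¬ x.1 = w.1) := by
    ext x
    simp only [SimpleGraph.mem_neighborFinset, Finset.mem_filter, Finset.mem_univ, true_and,
      SimpleGraph.comap_adj, SimpleGraph.top_adj]
    exact ⟨fun h => fun he => h (he.symm), fun h => fun he => h (he.symm)⟩
  have h2 := Finset.card_filter_add_card_filter_not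
    (s := (Finset.univ : Finset ((_ : Fin k) × Fin n)))
    (p := fun x : (_ : Fin k) × Fin n => x.1 = w.1)
  rw [fiber_card k n w, Finset.card_univ, card_VT] at h2
  rw [← SimpleGraph.card_neighborFinset_eq_degree, h1]
  omega

end Kpartite


set_option maxHeartbeats 1000000 in
lemma stuck_step (k n : ℕ) (hk : 3 ≤ k) (hn : 1 ≤ n)
    (G : SimpleGraph ((_ : Fin k) × Fin n))
    (hG : G ≤ completeMultipartiteGraph (fun _ : Fin k => Fin n))
    (hedges : ((k : ℤ) ^ 2 - k) * (n : ℤ) ^ 2 - 2 * (n : ℤ) * ((k : ℤ) - 1) + 4 ≤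
      2 * (G.edgeSet.ncard : ℤ))
    (H : SimpleGraph ((_ : Fin k) × Fin n)) (hle : G ≤ H)
    (hex : ∃ x y : ((_ : Fin k) × Fin n), x ≠ y ∧ ¬H.Adj x y) :
    ∃ u v : ((_ : Fin k) × Fin n), u ≠ v ∧ ¬H.Adj u v ∧
      Fintype.card ((_ : Fin k) × Fin n) ≤
        (H.neighborSet u).ncard + (H.neighborSet v).ncard := by
  classical
  by_contra hstuck
  push_neg at hstuck
  haveI hciK : DecidableRel (completeMultipartiteGraph (fun _ : Fin k => Fin n)).Adj :=
    Classical.decRel _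
  set K := completeMultipartiteGraph (fun _ : Fin k => Fin n) with hKdef
  set A : ℤ := ((k * n : ℕ) : ℤ) with hAdef
  set nn : ℤ := (n : ℤ) with hnndef
  have hAkn : A = (k : ℤ) * (n : ℤ) := by rw [hAdef]; push_cast; ring
  have hA3n : 3 * nn ≤ A := by
    rw [hAkn, hnndef]
    have : (3 : ℤ) ≤ (k : ℤ) := by exact_mod_cast hk
    nlinarith [show (0:ℤ) ≤ (n:ℤ) by positivity]
  have hnn1 : 1 ≤ nn := by rw [hnndef]; exact_mod_cast hn
  have hdc : ∀ w, (H.neighborSet w).ncard = H.degree w := fun w => by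
    rw [Set.ncard_eq_toFinset_card', Set.toFinset_card,
      SimpleGraph.card_neighborSet_eq_degree]
  have hstuck' : ∀ x y, x ≠ y → ¬H.Adj x y →
      (H.degree x : ℤ) + H.degree y ≤ A - 1 := by
    intro x y hxy hnadj
    have h1 := hstuck x y hxy hnadj
    rw [hdc, hdc, card_VT] at h1
    rw [hAdef]
    omega
  have hKdeg : ∀ w, (K.degree w : ℤ) = A - nn := fun w => by
    have h : K.degree w + n = k * n := degree_K k n w
    rw [hAdef, hnndef]
    omega
  have hGH : ∀ w, G.degree w ≤ H.degree w := fun w =>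
    Finset.card_le_card (fun x hx => by
      rw [SimpleGraph.mem_neighborFinset] at hx ⊢; exact hle hx)
  have hGK : ∀ w, G.degree w ≤ K.degree w := fun w =>
    Finset.card_le_card (fun x hx => by
      rw [SimpleGraph.mem_neighborFinset] at hx ⊢; exact hG hx)
  have hHub : ∀ w, H.degree w < k * n := fun w => card_VT k n ▸ H.degree_lt_card_verts w
  set d : ((_ : Fin k) × Fin n) → ℤ := fun w => (K.degree w : ℤ) - G.degree w with hd
  have hdnn : ∀ w, 0 ≤ d w := fun w => by
    rw [hd]
    have := hGK w
    simp only []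
    omega
  have hdH : ∀ w, (A - nn) - H.degree w ≤ d w := fun w => by
    rw [hd]
    have h1 := hGH w
    have h2 := hKdeg w
    simp only []
    omega
  -- edge counting
  set M : ℕ := (K.edgeFinset \ G.edgeFinset).card with hM
  have hsubE : G.edgeFinset ⊆ K.edgeFinset := SimpleGraph.edgeFinset_mono hG
  have hGle : G.edgeFinset.card ≤ K.edgeFinset.card := Finset.card_le_card hsubE
  have hMcard : M = K.edgeFinset.card - G.edgeFinset.card := by
    rw [hM, Finset.card_sdiff_of_subset hsubE]
  have hsumG : ∑ w, G.degree w = 2 * G.edgeFinset.card :=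
    SimpleGraph.sum_degrees_eq_twice_card_edges G
  have hsumK : ∑ w, K.degree w = 2 * K.edgeFinset.card :=
    SimpleGraph.sum_degrees_eq_twice_card_edges K
  have hsumd : ∑ w, d w = 2 * (K.edgeFinset.card : ℤ) - 2 * (G.edgeFinset.card : ℤ) := by
    rw [hd]
    rw [Finset.sum_sub_distrib, ← Nat.cast_sum, ← Nat.cast_sum, hsumG, hsumK]
    push_cast
    ring
  have h2M : 2 * (M : ℤ) = ∑ w, d w := by
    rw [hsumd, hMcard]
    omega
  have hKtot : 2 * (K.edgeFinset.card : ℤ) = A * (A - nn) := by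
    have h2 : ∑ w, ((K.degree w : ℕ) : ℤ) = ∑ _w : ((_ : Fin k) × Fin n), (A - nn) :=
      Finset.sum_congr rfl (fun w _ => hKdeg w)
    rw [Finset.sum_const, Finset.card_univ, card_VT, nsmul_eq_mul, ← hAdef] at h2
    have h1 : ((2 * K.edgeFinset.card : ℕ) : ℤ) = ∑ w, ((K.degree w : ℕ) : ℤ) := by
      rw [← hsumK, Nat.cast_sum]
    rw [h2] at h1
    push_cast at h1
    rw [← h1]
  have hEc : (G.edgeSet.ncard : ℤ) = (G.edgeFinset.card : ℤ) := by
    congr 1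
    rw [← SimpleGraph.coe_edgeFinset, Set.ncard_coe_finset]
  have hedges' : A * (A - nn) - 2 * (A - nn) + 4 ≤ 2 * (G.edgeFinset.card : ℤ) := by
    rw [← hEc]
    calc A * (A - nn) - 2 * (A - nn) + 4
        = ((k : ℤ) ^ 2 - k) * (n : ℤ) ^ 2 - 2 * (n : ℤ) * ((k : ℤ) - 1) + 4 := by
          rw [hAkn, hnndef]; ring
      _ ≤ 2 * (G.edgeSet.ncard : ℤ) := hedges
  have hdsum : ∑ w, d w ≤ 2 * (A - nn) - 4 := by
    rw [hsumd]
    linarith [hKtot, hedges']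
  have hM2 : 2 * (M : ℤ) ≤ 2 * (A - nn) - 4 := by rw [h2M]; exact hdsum
  -- incidence counting
  have hincsub : ∀ w, G.incidenceFinset w ⊆ K.incidenceFinset w := by
    intro w e he
    rw [SimpleGraph.mem_incidenceFinset] at he ⊢
    exact ⟨SimpleGraph.edgeSet_mono hG he.1, he.2⟩
  have hAu : ∀ w, ((K.incidenceFinset w \ G.incidenceFinset w).card : ℤ) = d w := by
    intro w
    rw [Finset.card_sdiff_of_subset (hincsub w), SimpleGraph.card_incidenceFinset_eq_degree,
      SimpleGraph.card_incidenceFinset_eq_degree]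
    have := hGK w
    rw [hd]
    simp only []
    omega
  have hAsubF : ∀ w, K.incidenceFinset w \ G.incidenceFinset w ⊆
      K.edgeFinset \ G.edgeFinset := by
    intro w e he
    rw [Finset.mem_sdiff] at he ⊢
    rw [SimpleGraph.mem_incidenceFinset] at he
    constructor
    · rw [SimpleGraph.mem_edgeFinset]
      exact he.1.1
    · intro hcon
      apply he.2
      rw [SimpleGraph.mem_incidenceFinset]
      exact ⟨SimpleGraph.mem_edgeFinset.mp hcon, he.1.2⟩
  have hW : ∀ w, d w ≤ (M : ℤ) := fun w => by
    rw [← hAu w, hM]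
    exact_mod_cast Finset.card_le_card (hAsubF w)
  have hpaird : ∀ u y, u ≠ y → d u + d y ≤ (M : ℤ) + 1 := by
    intro u y huy
    have hcup : (K.incidenceFinset u \ G.incidenceFinset u) ∪
        (K.incidenceFinset y \ G.incidenceFinset y) ⊆ K.edgeFinset \ G.edgeFinset :=
      Finset.union_subset (hAsubF u) (hAsubF y)
    have hcap : (K.incidenceFinset u \ G.incidenceFinset u) ∩
        (K.incidenceFinset y \ G.incidenceFinset y) ⊆ {s(u,y)} := by
      intro e he
      rw [Finset.mem_inter, Finset.mem_sdiff, Finset.mem_sdiff] at he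
      obtain ⟨⟨h1, -⟩, ⟨h2, -⟩⟩ := he
      rw [SimpleGraph.mem_incidenceFinset] at h1 h2
      rw [Finset.mem_singleton]
      exact (Sym2.mem_and_mem_iff huy).mp ⟨h1.2, h2.2⟩
    have h1 := Finset.card_union_add_card_inter
      (K.incidenceFinset u \ G.incidenceFinset u)
      (K.incidenceFinset y \ G.incidenceFinset y)
    have h2 : ((K.incidenceFinset u \ G.incidenceFinset u) ∪
        (K.incidenceFinset y \ G.incidenceFinset y)).card ≤ M := by
      rw [hM]; exact Finset.card_le_card hcup
    have h3 : ((K.incidenceFinset u \ G.incidenceFinset u) ∩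
        (K.incidenceFinset y \ G.incidenceFinset y)).card ≤ 1 := by
      exact le_trans (Finset.card_le_card hcap) (by simp)
    have h4 := hAu u
    have h5 := hAu y
    omega
  -- main case analysis
  obtain ⟨x0, y0, hxy0, hnadj0⟩ := hex
  obtain ⟨u, -, humin⟩ :=
    Finset.exists_min_image Finset.univ (fun w => H.degree w) ⟨x0, Finset.mem_univ _⟩
  have humin' : ∀ w, H.degree u ≤ H.degree w := fun w => humin w (Finset.mem_univ _)
  by_cases hcaseA : ∀ x y : ((_ : Fin k) × Fin n), x ≠ y → ¬H.Adj x y → (u = x ∨ u = y)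
  · -- Case A : every non-adjacent pair contains u
    obtain ⟨w, hwu, hnadjuw⟩ : ∃ w, w ≠ u ∧ ¬H.Adj u w := by
      rcases hcaseA x0 y0 hxy0 hnadj0 with h | h
      · subst h
        exact ⟨y0, Ne.symm hxy0, hnadj0⟩
      · subst h
        exact ⟨x0, hxy0, fun hc => hnadj0 hc.symm⟩
    have hTsub : Finset.univ \ insert w (H.neighborFinset w) ⊆ {u} := by
      intro z hz
      simp only [Finset.mem_sdiff, Finset.mem_insert, not_or, Finset.mem_univ, true_and,
        SimpleGraph.mem_neighborFinset] at hz
      rcases hcaseA z w hz.1 (fun hc => hz.2 hc.symm) with h | h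
      · rw [Finset.mem_singleton]
        exact h.symm
      · exact absurd h.symm hwu
    have hwnem : w ∉ H.neighborFinset w := by simp
    have hins : (insert w (H.neighborFinset w)).card = H.degree w + 1 :=
      Finset.card_insert_of_notMem hwnem
    have hsd : (Finset.univ \ insert w (H.neighborFinset w)).card
        = k * n - (H.degree w + 1) := by
      rw [Finset.card_sdiff_of_subset (Finset.subset_univ _), Finset.card_univ, card_VT, hins]
    have hle1 : (Finset.univ \ insert w (H.neighborFinset w)).card ≤ 1 :=
      le_trans (Finset.card_le_card hTsub) (by simp)
    have hwdeg : k * n ≤ H.degree w + 2 := by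
      have := hHub w
      omega
    have hsuw := hstuck' u w (fun hc => hwu hc.symm) hnadjuw
    have hdu := hdH u
    have hduM := hW u
    omega
  · -- Case B
    push_neg at hcaseA
    obtain ⟨a, b, hab, hnadjab, hua, hub⟩ := hcaseA
    obtain ⟨y, hyu, hy2⟩ : ∃ y, u ≠ y ∧ 2 * (H.degree y : ℤ) ≤ A - 1 := by
      have hs := hstuck' a b hab hnadjab
      by_cases hd0 : H.degree a ≤ H.degree b
      · refine ⟨a, hua, ?_⟩
        have : (H.degree a : ℤ) ≤ (H.degree b : ℤ) := by exact_mod_cast hd0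
        omega
      · refine ⟨b, hub, ?_⟩
        have : (H.degree b : ℤ) ≤ (H.degree a : ℤ) := by
          have := le_of_not_ge hd0
          exact_mod_cast this
        omega
    set T := Finset.univ \ insert y (H.neighborFinset y) with hT
    have hynotnbr : y ∉ H.neighborFinset y := by simp
    have hTcard : (T.card : ℤ) = A - 1 - H.degree y := by
      rw [hT, Finset.card_sdiff_of_subset (Finset.subset_univ _), Finset.card_univ, card_VT,
        Finset.card_insert_of_notMem hynotnbr, hAdef]
      have h9 := hHub y
      have h8 : (H.neighborFinset y).card = H.degree y := rfl
      omega
    have hTmem : ∀ w ∈ T, w ≠ y ∧ ¬H.Adj y w := by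
      intro w hw
      rw [hT] at hw
      simp only [Finset.mem_sdiff, Finset.mem_insert, not_or, Finset.mem_univ, true_and,
        SimpleGraph.mem_neighborFinset] at hw
      exact hw
    have hTd : ∀ w ∈ T.erase u, (H.degree y : ℤ) - nn + 1 ≤ d w := by
      intro w hw
      have hw' := hTmem w (Finset.mem_of_mem_erase hw)
      have hsyw := hstuck' y w (fun hc => hw'.1 hc.symm) hw'.2
      have := hdH w
      omega
    have hTsum : ((T.erase u).card : ℤ) * ((H.degree y : ℤ) - nn + 1)
        ≤ ∑ w ∈ T.erase u, d w := by
      have h := Finset.card_nsmul_le_sum (T.erase u) d ((H.degree y : ℤ) - nn + 1) hTd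
      rwa [nsmul_eq_mul] at h
    have hTecard : (T.card : ℤ) - 1 ≤ ((T.erase u).card : ℤ) := by
      have := Finset.pred_card_le_card_erase (s := T) (a := u)
      omega
    have hyne : y ∉ T.erase u := by
      intro hc
      exact (hTmem y (Finset.mem_of_mem_erase hc)).1 rfl
    have hune : u ∉ insert y (T.erase u) := by
      simp only [Finset.mem_insert]
      rintro (hc | hc)
      · exact hyu hc
      · exact Finset.notMem_erase u T hc
    have hSsum : d u + (d y + ∑ w ∈ T.erase u, d w) ≤ ∑ w, d w := by
      rw [← Finset.sum_insert hyne, ← Finset.sum_insert hune]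
      exact Finset.sum_le_sum_of_subset_of_nonneg (Finset.subset_univ _)
        (fun i _ _ => hdnn i)
    have hdu : (A - nn) - H.degree u ≤ d u := hdH u
    have hdy : (A - nn) - H.degree y ≤ d y := hdH y
    have huy : (H.degree u : ℤ) ≤ (H.degree y : ℤ) := by exact_mod_cast humin' y
    have hpara := hpaird u y hyu
    clear_value T d A nn M
    have hc02 : (2:ℤ) ≤ (H.degree y : ℤ) - nn + 1 := by
      omega
    have hT1 : (0:ℤ) ≤ (T.card : ℤ) - 1 := by
      omega
    have hprod : ((T.card : ℤ) - 1) * 2 ≤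
        ((T.erase u).card : ℤ) * ((H.degree y : ℤ) - nn + 1) := by
      calc ((T.card : ℤ) - 1) * 2 ≤ ((T.erase u).card : ℤ) * 2 := by
            linarith [hTecard]
        _ ≤ ((T.erase u).card : ℤ) * ((H.degree y : ℤ) - nn + 1) := by
            apply mul_le_mul_of_nonneg_left hc02
            positivity
    linarith [hdsum, hSsum, hTsum, hprod, hTcard, hdu, hdy, hy2, hpara, hM2]

end BKPH

open SimpleGraph

/-- Theorem 14 / `ham`: Let `k ≥ 3` and `n ≥ 1` be integers. If `G` is a
balanced `k`-partite graph of order `p = kn` (i.e. a subgraph of the complete balanced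
`k`-partite graph `K_k(n)`) with at least `((k² − k)n² − 2n(k − 1) + 4)/2` edges,
then `G` is hamiltonian. -/
theorem balanced_kpartite_edges_hamiltonian
    (k n : ℕ) (hk : 3 ≤ k) (hn : 1 ≤ n)
    (G : SimpleGraph ((_ : Fin k) × Fin n))
    (hG : G ≤ completeMultipartiteGraph (fun _ : Fin k => Fin n))
    (hedges : ((k : ℤ) ^ 2 - k) * (n : ℤ) ^ 2 - 2 * (n : ℤ) * ((k : ℤ) - 1) + 4 ≤
      2 * (G.edgeSet.ncard : ℤ)) :
    G.IsHamiltonian := by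
  classical
  have hcard3 : 3 ≤ Fintype.card ((_ : Fin k) × Fin n) := by
    rw [BKPH.card_VT k n]
    have h1 : 3 * 1 ≤ k * n := Nat.mul_le_mul hk hn
    omega
  apply BKPH.isHamiltonian_of_stuck_free G hcard3
  intro H hle hex
  exact BKPH.stuck_step k n hk hn G hG hedges H hle hex
end

section
/- Let k ≥ 3 be an integer and let (n_1, …, n_k) be positive integers with n_1 ≥ n_2 ≥ … ≥ n_k, and set p = n_1 + … + n_k. Suppose p is even and n_1 = p/2. Then every k-partite graph G with part sizes (n_1, …, n_k) having at least (p/2)² − p/2 + 2 edges with an endpoint in the part V_1 of size n_1 is hamiltonian. -/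
open SimpleGraph List

namespace KPHelp


variable {V : Type*}

lemma chain'_of_forall_mem {α : Type*} {R : α → α → Prop} (l : List α)
    (h : ∀ a ∈ l, ∀ b ∈ l, R a b) : l.Chain' R := by
  induction l with
  | nil => simp [List.Chain']
  | cons a t ih =>
    simp only [List.Chain', List.isChain_cons]
    refine ⟨fun b hb => h _ (by simp) _ (by simp [List.mem_of_mem_head? hb]), ih ?_⟩
    intro x hx y hy
    exact h _ (by simp [hx]) _ (by simp [hy])

lemma head?_ne_getLast {α : Type*} {l : List α} (h2 : 2 ≤ l.length) (hnd : l.Nodup)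
    (hne : l ≠ []) : l.head? ≠ some (l.getLast hne) := by
  match l, h2 with
  | a :: b :: t, _ =>
    intro h
    simp only [List.head?_cons, Option.some.injEq] at h
    rw [List.getLast_cons (List.cons_ne_nil b t)] at h
    have hm : (b :: t).getLast (List.cons_ne_nil b t) ∈ b :: t := List.getLast_mem _
    rw [← h] at hm
    exact (List.nodup_cons.mp hnd).1 hm

def walkOfChain {G : SimpleGraph V} :
    (a : V) → (l : List V) → List.Chain G.Adj a l →
      G.Walk a ((a :: l).getLast (List.cons_ne_nil a l))
  | _, [], _ => Walk.nil
  | a, b :: l, h =>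
    (Walk.cons (List.chain_cons.mp h).1 (walkOfChain b l (List.chain_cons.mp h).2)).copy
      rfl (List.getLast_cons (List.cons_ne_nil b l)).symm

lemma walkOfChain_support {G : SimpleGraph V} :
    ∀ (a : V) (l : List V) (h : List.Chain G.Adj a l),
      (walkOfChain a l h).support = a :: l
  | _, [], _ => rfl
  | a, b :: l, h => by
    simp [walkOfChain, walkOfChain_support b l (List.chain_cons.mp h).2]

lemma edge_head {G : SimpleGraph V} {u v w : V} (p : G.Walk u v) (hnd : p.support.Nodup)
    (he : s(w, u) ∈ p.edges) : p.support.tail.head? = some w := by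
  cases p with
  | nil => simp at he
  | @cons _ x _ h' q =>
    rw [Walk.edges_cons, List.mem_cons] at he
    rw [Walk.support_cons] at hnd ⊢
    rcases he with he | he
    · rw [Sym2.eq_iff] at he
      rcases he with ⟨rfl, rfl⟩ | ⟨rfl, -⟩
      · exact absurd h' G.irrefl
      · rw [List.tail_cons, q.support_eq_cons]
        rfl
    · exfalso
      have hu : u ∈ q.support := Walk.snd_mem_support_of_mem_edges q he
      exact (List.nodup_cons.mp hnd).1 hu

lemma hamCycle_of_list {G : SimpleGraph V} [DecidableEq V] [Fintype V] (l : List V)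
    (hlen : 3 ≤ l.length) (hnd : l.Nodup) (hall : ∀ v, v ∈ l)
    (hchain : l.Chain' G.Adj)
    (hwrap : ∀ a ∈ l.getLast?, ∀ b ∈ l.head?, G.Adj a b) :
    ∃ (v : V) (c : G.Walk v v), c.IsHamiltonianCycle := by
  match l, hlen with
  | a :: t, hlen =>
    have hchain' : List.Chain G.Adj a t := hchain
    set last := ((a :: t).getLast (List.cons_ne_nil a t)) with hlast
    let p : G.Walk a last := walkOfChain a t hchain'
    have hsup : p.support = a :: t := walkOfChain_support a t hchain'
    have hadj : G.Adj last a := by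
      refine hwrap _ ?_ _ ?_
      · rw [List.getLast?_eq_getLast (List.cons_ne_nil a t)]; rfl
      · rfl
    refine ⟨last, Walk.cons hadj p, ?_⟩
    rw [Walk.isHamiltonianCycle_iff_isCycle_and_support_count_tail_eq_one]
    constructor
    · rw [Walk.cons_isCycle_iff]
      refine ⟨Walk.IsPath.mk' (hsup ▸ hnd), fun he => ?_⟩
      have h1 := edge_head p (hsup ▸ hnd) he
      rw [hsup, List.tail_cons] at h1
      have ht2 : 2 ≤ t.length := by
        have := hlen; simp only [List.length_cons] at this; omega
      have htne : t ≠ [] := by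
        intro h; rw [h] at ht2; simp at ht2
      have : last = t.getLast htne := by
        rw [hlast, List.getLast_cons htne]
      rw [this] at h1
      exact head?_ne_getLast ht2 (List.nodup_cons.mp hnd).2 htne h1
    · intro w
      rw [Walk.support_cons, List.tail_cons, hsup]
      exact List.count_eq_one_of_mem hnd (hall w)



def pcyc (G : SimpleGraph V) (l : List (V × V)) : Prop :=
  (∀ p ∈ l, G.Adj p.1 p.2) ∧ l.Chain' (fun p q => G.Adj p.2 q.1) ∧
    ∀ a ∈ l.getLast?, ∀ b ∈ l.head?, G.Adj a.2 b.1

def toV : List (V × V) → List V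
  | [] => []
  | p :: l => p.1 :: p.2 :: toV l

lemma mem_toV {a : V} : ∀ {l : List (V × V)},
    a ∈ toV l ↔ a ∈ l.map Prod.fst ∨ a ∈ l.map Prod.snd
  | [] => by simp [toV]
  | p :: l => by
    simp [toV, mem_toV (l := l)]
    tauto

lemma length_toV : ∀ (l : List (V × V)), (toV l).length = 2 * l.length
  | [] => rfl
  | p :: l => by simp [toV, length_toV l]; omega

lemma nodup_toV : ∀ (l : List (V × V)), (l.map Prod.fst).Nodup → (l.map Prod.snd).Nodup →
    (∀ a, a ∈ l.map Prod.fst → a ∈ l.map Prod.snd → False) → (toV l).Nodup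
  | [], _, _, _ => by simp [toV]
  | p :: l, h1, h2, hx => by
    simp only [List.map_cons, List.nodup_cons] at h1 h2
    simp only [toV, List.nodup_cons]
    refine ⟨?_, ?_, nodup_toV l h1.2 h2.2 ?_⟩
    · simp only [List.mem_cons, mem_toV]
      push_neg
      refine ⟨fun h => hx p.1 (by simp) (by simp [h]), h1.1, fun h => hx p.1 (by simp) (by simp [h])⟩
    · simp only [mem_toV]
      push_neg
      exact ⟨fun h => hx p.2 (by simp [h]) (by simp), h2.1⟩
    · intro a ha hb
      exact hx a (by simp [ha]) (by simp [hb])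

lemma head?_toV : ∀ (l : List (V × V)), (toV l).head? = l.head?.map Prod.fst
  | [] => rfl
  | p :: l => rfl

lemma getLast?_toV : ∀ (l : List (V × V)), (toV l).getLast? = l.getLast?.map Prod.snd
  | [] => rfl
  | [p] => rfl
  | p :: q :: l => by
    have h1 : toV (p :: q :: l) = p.1 :: p.2 :: q.1 :: q.2 :: toV l := rfl
    rw [h1, List.getLast?_cons_cons, List.getLast?_cons_cons,
      show q.1 :: q.2 :: toV l = toV (q :: l) from rfl, getLast?_toV (q :: l),
      List.getLast?_cons_cons]

lemma chain'_toV {G : SimpleGraph V} : ∀ (l : List (V × V)),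
    (∀ p ∈ l, G.Adj p.1 p.2) → l.Chain' (fun p q => G.Adj p.2 q.1) →
    (toV l).Chain' G.Adj
  | [], _, _ => by simp [toV, List.Chain']
  | p :: l, hin, hch => by
    simp only [List.Chain', List.isChain_cons] at hch
    show List.Chain' G.Adj (p.1 :: p.2 :: toV l)
    simp only [List.Chain', List.isChain_cons_cons]
    refine ⟨hin p (by simp), ?_⟩
    rw [List.isChain_cons]
    refine ⟨?_, chain'_toV l (fun q hq => hin q (by simp [hq])) hch.2⟩
    intro b hb
    rw [head?_toV] at hb
    rcases l with _ | ⟨q, l⟩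
    · simp at hb
    · simp only [List.head?_cons, Option.map_some, Option.mem_def, Option.some.injEq] at hb
      subst hb
      exact hch.1 q rfl

lemma exists_pcyc [DecidableEq V] (G : SimpleGraph V) [DecidableRel G.Adj] :
    ∀ (m : ℕ) (X Y : Finset V), 2 ≤ m → X.card = m → Y.card = m → Disjoint X Y →
      ((X ×ˢ Y).filter (fun p => ¬ G.Adj p.1 p.2)).card ≤ m - 2 →
      ∃ l : List (V × V), (l.map Prod.fst).Nodup ∧ (l.map Prod.snd).Nodup ∧
        (l.map Prod.fst).toFinset = X ∧ (l.map Prod.snd).toFinset = Y ∧ pcyc G l := by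
  intro m
  induction m using Nat.strong_induction_on with
  | _ m ih =>
  intro X Y hm hX hY hdisj hmiss
  by_cases hM : (X ×ˢ Y).filter (fun p => ¬ G.Adj p.1 p.2) = ∅
  · have hadj : ∀ x ∈ X, ∀ y ∈ Y, G.Adj x y := by
      intro x hx y hy
      by_contra h
      have hmem : (x, y) ∈ (X ×ˢ Y).filter (fun p => ¬ G.Adj p.1 p.2) := by
        simp [Finset.mem_filter, Finset.mem_product, hx, hy, h]
      rw [hM] at hmem
      simp at hmem
    have hlen : X.toList.length = Y.toList.length := by
      rw [Finset.length_toList, Finset.length_toList, hX, hY]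
    have hf : (X.toList.zip Y.toList).map Prod.fst = X.toList :=
      List.map_fst_zip hlen.le
    have hs : (X.toList.zip Y.toList).map Prod.snd = Y.toList :=
      List.map_snd_zip hlen.ge
    have hmem : ∀ p ∈ X.toList.zip Y.toList, p.1 ∈ X ∧ p.2 ∈ Y := by
      rintro ⟨a, b⟩ hp
      have h := List.of_mem_zip hp
      exact ⟨Finset.mem_toList.mp h.1, Finset.mem_toList.mp h.2⟩
    refine ⟨X.toList.zip Y.toList, ?_, ?_, ?_, ?_, ?_, ?_, ?_⟩
    · rw [hf]; exact X.nodup_toList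
    · rw [hs]; exact Y.nodup_toList
    · rw [hf]; exact Finset.toList_toFinset X
    · rw [hs]; exact Finset.toList_toFinset Y
    · exact fun p hp => hadj _ (hmem p hp).1 _ (hmem p hp).2
    · exact chain'_of_forall_mem _ fun p hp q hq =>
        (hadj _ (hmem q hq).1 _ (hmem p hp).2).symm
    · exact fun a ha b hb =>
        (hadj _ (hmem b (List.mem_of_mem_head? hb)).1 _
          (hmem a (List.mem_of_mem_getLast? ha)).2).symm
  · obtain ⟨⟨x, y₀⟩, hxy₀⟩ := Finset.nonempty_of_ne_empty hM
    have hx : x ∈ X := (Finset.mem_product.mp (Finset.mem_filter.mp hxy₀).1).1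
    have hm3 : 3 ≤ m := by
      have h1 : 1 ≤ ((X ×ˢ Y).filter (fun p => ¬ G.Adj p.1 p.2)).card :=
        Finset.card_pos.mpr ⟨_, hxy₀⟩
      omega
    have hyfull : ∃ y ∈ Y, ∀ x' ∈ X, G.Adj x' y := by
      by_contra h
      push_neg at h
      have hsub : Y ⊆ ((X ×ˢ Y).filter (fun p => ¬ G.Adj p.1 p.2)).image Prod.snd := by
        intro y hy
        obtain ⟨x', hx', hna⟩ := h y hy
        exact Finset.mem_image.mpr ⟨(x', y),
          Finset.mem_filter.mpr ⟨Finset.mem_product.mpr ⟨hx', hy⟩, hna⟩, rfl⟩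
      have h2 := (Finset.card_le_card hsub).trans (Finset.card_image_le.trans hmiss)
      omega
    obtain ⟨y, hy, hyfull⟩ := hyfull
    have hX' : (X.erase x).card = m - 1 := by rw [Finset.card_erase_of_mem hx, hX]
    have hY' : (Y.erase y).card = m - 1 := by rw [Finset.card_erase_of_mem hy, hY]
    have hd' : Disjoint (X.erase x) (Y.erase y) :=
      hdisj.mono (Finset.erase_subset _ _) (Finset.erase_subset _ _)
    have hmiss' : ((X.erase x ×ˢ Y.erase y).filter (fun p => ¬ G.Adj p.1 p.2)).card
        ≤ m - 1 - 2 := by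
      have hsub : (X.erase x ×ˢ Y.erase y).filter (fun p => ¬ G.Adj p.1 p.2) ⊆
          ((X ×ˢ Y).filter (fun p => ¬ G.Adj p.1 p.2)).erase (x, y₀) := by
        rintro ⟨a, b⟩ hab
        rw [Finset.mem_filter, Finset.mem_product] at hab
        refine Finset.mem_erase.mpr ⟨?_, Finset.mem_filter.mpr
          ⟨Finset.mem_product.mpr ⟨Finset.mem_of_mem_erase hab.1.1,
            Finset.mem_of_mem_erase hab.1.2⟩, hab.2⟩⟩
        intro h
        have := (Finset.mem_erase.mp hab.1.1).1
        rw [h] at this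
        exact this rfl
      have h2 := Finset.card_le_card hsub
      rw [Finset.card_erase_of_mem hxy₀] at h2
      omega
    obtain ⟨l, hf1, hf2, hf3, hf4, hin, hch, hwr⟩ :=
      ih (m - 1) (by omega) (X.erase x) (Y.erase y) (by omega) hX' hY' hd' hmiss'
    have hexists : ∃ y' ∈ Y.erase y, G.Adj x y' := by
      by_contra h
      push_neg at h
      have hsub : Y.erase y ⊆ ((X ×ˢ Y).filter (fun p => ¬ G.Adj p.1 p.2)).image Prod.snd := by
        intro y' hy'
        exact Finset.mem_image.mpr ⟨(x, y'), Finset.mem_filter.mpr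
          ⟨Finset.mem_product.mpr ⟨hx, Finset.mem_of_mem_erase hy'⟩, h y' hy'⟩, rfl⟩
      have h2 := (Finset.card_le_card hsub).trans (Finset.card_image_le.trans hmiss)
      rw [hY'] at h2
      omega
    obtain ⟨y', hy', hxy'⟩ := hexists
    have hy'mem : y' ∈ l.map Prod.snd := by
      rw [← hf4] at hy'
      exact List.mem_toFinset.mp hy'
    obtain ⟨p, hpl, hp2⟩ := List.mem_map.mp hy'mem
    obtain ⟨l₁, l₂, rfl⟩ := List.append_of_mem hpl
    have hxp2 : G.Adj x p.2 := hp2 ▸ hxy'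
    have hp1X : p.1 ∈ X := by
      have h1 : p.1 ∈ (l₁ ++ p :: l₂).map Prod.fst := List.mem_map_of_mem hpl
      rw [← List.mem_toFinset, hf3] at h1
      exact Finset.mem_of_mem_erase h1
    have hpermf : (l₁ ++ (p.1, y) :: (x, p.2) :: l₂).map Prod.fst ~
        x :: (l₁ ++ p :: l₂).map Prod.fst := by
      have h1 : (l₁ ++ (p.1, y) :: (x, p.2) :: l₂).map Prod.fst =
          (l₁.map Prod.fst ++ [p.1]) ++ x :: l₂.map Prod.fst := by simp
      have h2 : (l₁ ++ p :: l₂).map Prod.fst =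
          (l₁.map Prod.fst ++ [p.1]) ++ l₂.map Prod.fst := by simp
      rw [h1, h2]
      exact List.perm_middle
    have hperms : (l₁ ++ (p.1, y) :: (x, p.2) :: l₂).map Prod.snd ~
        y :: (l₁ ++ p :: l₂).map Prod.snd := by
      have h1 : (l₁ ++ (p.1, y) :: (x, p.2) :: l₂).map Prod.snd =
          l₁.map Prod.snd ++ y :: (p.2 :: l₂.map Prod.snd) := by simp
      have h2 : (l₁ ++ p :: l₂).map Prod.snd =
          l₁.map Prod.snd ++ (p.2 :: l₂.map Prod.snd) := by simp
      rw [h1, h2]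
      exact List.perm_middle
    have hxnot : x ∉ (l₁ ++ p :: l₂).map Prod.fst := by
      intro h
      have h2 : x ∈ X.erase x := hf3 ▸ List.mem_toFinset.mpr h
      exact Finset.notMem_erase x X h2
    have hynot : y ∉ (l₁ ++ p :: l₂).map Prod.snd := by
      intro h
      have h2 : y ∈ Y.erase y := hf4 ▸ List.mem_toFinset.mpr h
      exact Finset.notMem_erase y Y h2
    refine ⟨l₁ ++ (p.1, y) :: (x, p.2) :: l₂, ?_, ?_, ?_, ?_, ?_, ?_, ?_⟩
    · exact hpermf.nodup_iff.mpr (List.nodup_cons.mpr ⟨hxnot, hf1⟩)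
    · exact hperms.nodup_iff.mpr (List.nodup_cons.mpr ⟨hynot, hf2⟩)
    · rw [List.toFinset_eq_of_perm _ _ hpermf, List.toFinset_cons, hf3]
      exact Finset.insert_erase hx
    · rw [List.toFinset_eq_of_perm _ _ hperms, List.toFinset_cons, hf4]
      exact Finset.insert_erase hy
    · intro q hq
      rcases List.mem_append.mp hq with hq1 | hq2
      · exact hin q (by simp [hq1])
      · simp only [List.mem_cons] at hq2
        rcases hq2 with rfl | rfl | hq2
        · exact hyfull p.1 hp1X
        · exact hxp2
        · exact hin q (by simp [hq2])
    · simp only [List.Chain', List.isChain_append] at hch ⊢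
      refine ⟨hch.1, ?_, ?_⟩
      · rw [List.isChain_cons_cons]
        refine ⟨(hyfull x hx).symm, ?_⟩
        rw [List.isChain_cons]
        have h2 := hch.2.1
        rw [List.isChain_cons] at h2
        exact ⟨h2.1, h2.2⟩
      · intro a ha b hb
        simp only [List.head?_cons, Option.mem_def, Option.some.injEq] at hb
        subst hb
        exact hch.2.2 a ha p (by simp)
    · intro a ha b hb
      rcases l₂ with _ | ⟨c, t⟩
      · have ha' : a = (x, p.2) := Eq.symm (by simpa using ha)
        have hb' : G.Adj p.2 b.1 := by
          rcases l₁ with _ | ⟨a₁, t₁⟩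
          · have hbe : (p.1, y) = b := by simpa using hb
            subst hbe
            exact hwr p (by simp) p (by simp)
          · have hb2 : b ∈ ((a₁ :: t₁) ++ p :: ([] : List (V × V))).head? := by
              simpa using hb
            exact hwr p (by rw [Option.mem_def, show a₁ :: t₁ ++ [p] = (a₁ :: t₁) ++ [p] from rfl]; exact List.getLast?_concat) b hb2
        subst ha'
        exact hb'
      · have ha2 : a ∈ ((l₁ ++ p :: c :: t)).getLast? := by
          rw [List.getLast?_append] at ha ⊢
          simpa using ha
        rcases l₁ with _ | ⟨a₁, t₁⟩
        · have hbe : (p.1, y) = b := by simpa using hb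
          subst hbe
          exact hwr a ha2 p (by simp)
        · have hb2 : b ∈ ((a₁ :: t₁) ++ p :: c :: t).head? := by
            simpa using hb
          exact hwr a ha2 b hb2

end KPHelp

open KPHelp in
/-- Theorem 19 / `evenhalfthm`: Let `k ≥ 3` and `(n 0, …, n (k-1))` be positive
integers with `n 0 ≥ … ≥ n (k-1)` and `p = ∑ n i`. If `p` is even and `n 0 = p/2`
(i.e. `p = 2 * n 0`), then every `k`-partite graph `G` with these part sizes having at least
`(p/2)² − p/2 + 2` edges with an endpoint in the part `V₁` of size `n 0` is hamiltonian. -/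

theorem kpartite_edges_incident_largest_part_hamiltonian
    (k : ℕ) (hk : 3 ≤ k) (n : Fin k → ℕ) (hpos : ∀ i, 0 < n i) (hmono : Antitone n)
    (hp : ∑ i, n i = 2 * n ⟨0, by omega⟩)
    (G : SimpleGraph ((i : Fin k) × Fin (n i)))
    (hG : G ≤ completeMultipartiteGraph (fun i => Fin (n i)))
    (hedges : (n ⟨0, by omega⟩ : ℤ) ^ 2 - (n ⟨0, by omega⟩ : ℤ) + 2 ≤
      ({e ∈ G.edgeSet | ∃ v ∈ e, v.1 = (⟨0, by omega⟩ : Fin k)}.ncard : ℤ)) :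
    G.IsHamiltonian := by
  classical
  intro _hcard
  set i0 : Fin k := ⟨0, by omega⟩ with hi0
  set m : ℕ := n i0 with hmdef
  -- basic size facts
  have hk' : (k : ℕ) ≤ ∑ i, n i := by
    calc (k : ℕ) = ∑ _i : Fin k, 1 := by simp
    _ ≤ ∑ i, n i := Finset.sum_le_sum fun i _ => hpos i
  have hm2 : 2 ≤ m := by omega
  set X : Finset ((i : Fin k) × Fin (n i)) := Finset.univ.filter (fun v => v.1 = i0) with hXdef
  set Y : Finset ((i : Fin k) × Fin (n i)) := Finset.univ.filter (fun v => v.1 ≠ i0) with hYdef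
  have hXcard : X.card = m := by
    have himg : X = (Finset.univ : Finset (Fin (n i0))).image (fun a => (⟨i0, a⟩ : (i : Fin k) × Fin (n i))) := by
      ext ⟨i, b⟩
      simp only [hXdef, Finset.mem_filter, Finset.mem_univ, true_and, Finset.mem_image]
      constructor
      · rintro rfl
        exact ⟨b, rfl⟩
      · rintro ⟨a, ha⟩
        cases ha
        rfl
    rw [himg, Finset.card_image_of_injective _ sigma_mk_injective, Finset.card_univ,
      Fintype.card_fin]
  have hVcard : Fintype.card ((i : Fin k) × Fin (n i)) = 2 * m := by
    rw [Fintype.card_sigma]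
    simpa using hp
  have hYcard : Y.card = m := by
    have h1 : X.card + Y.card = Fintype.card ((i : Fin k) × Fin (n i)) := by
      rw [hXdef, hYdef, ← Finset.card_univ]
      exact Finset.card_filter_add_card_filter_not _
    omega
  have hdisj : Disjoint X Y := by
    rw [Finset.disjoint_left]
    intro a ha hb
    rw [hXdef, Finset.mem_filter] at ha
    rw [hYdef, Finset.mem_filter] at hb
    exact hb.2 ha.2
  -- the edge set and the adjacent-pairs finset
  set S : Set (Sym2 ((i : Fin k) × Fin (n i))) := {e ∈ G.edgeSet | ∃ v ∈ e, v.1 = i0} with hSdef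
  set adjacent : Finset (((i : Fin k) × Fin (n i)) × ((i : Fin k) × Fin (n i))) := (X ×ˢ Y).filter (fun p => G.Adj p.1 p.2) with hAdef
  set missing : Finset (((i : Fin k) × Fin (n i)) × ((i : Fin k) × Fin (n i))) := (X ×ˢ Y).filter (fun p => ¬ G.Adj p.1 p.2) with hMdef
  have hcardsum : adjacent.card + missing.card = m * m := by
    rw [hAdef, hMdef, Finset.card_filter_add_card_filter_not, Finset.card_product,
      hXcard, hYcard]
  have hfin : S.Finite := Set.toFinite S
  have hScard : S.ncard = adjacent.card := by
    rw [Set.ncard_eq_toFinset_card _ hfin]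
    refine (Finset.card_bij (fun p _ => s(p.1, p.2)) ?_ ?_ ?_).symm
    · rintro ⟨u, w⟩ hp
      rw [hAdef, Finset.mem_filter, Finset.mem_product] at hp
      rw [Set.Finite.mem_toFinset, hSdef]
      refine ⟨hp.2, u, Sym2.mem_mk_left u w, ?_⟩
      have := hp.1.1
      rw [hXdef, Finset.mem_filter] at this
      exact this.2
    · rintro ⟨u, w⟩ hp ⟨u', w'⟩ hp' heq
      rw [hAdef, Finset.mem_filter, Finset.mem_product, hXdef, hYdef, Finset.mem_filter,
        Finset.mem_filter] at hp hp'
      rw [Sym2.eq_iff] at heq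
      rcases heq with ⟨rfl, rfl⟩ | ⟨rfl, rfl⟩
      · rfl
      · exact absurd hp.1.1.2 hp'.1.2.2
    · intro e he
      rw [Set.Finite.mem_toFinset, hSdef] at he
      induction e with
      | _ u w =>
        obtain ⟨hadj, v, hv, hv0⟩ := he
        rw [SimpleGraph.mem_edgeSet] at hadj
        have hne : u.1 ≠ w.1 := hG hadj
        rw [Sym2.mem_iff] at hv
        rcases hv with rfl | rfl
        · refine ⟨(v, w), ?_, rfl⟩
          rw [hAdef, Finset.mem_filter, Finset.mem_product]
          refine ⟨⟨?_, ?_⟩, hadj⟩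
          · rw [hXdef, Finset.mem_filter]; exact ⟨Finset.mem_univ _, hv0⟩
          · rw [hYdef, Finset.mem_filter]
            exact ⟨Finset.mem_univ _, by rw [← hv0]; exact hne.symm⟩
        · refine ⟨(v, u), ?_, Sym2.eq_swap⟩
          rw [hAdef, Finset.mem_filter, Finset.mem_product]
          refine ⟨⟨?_, ?_⟩, hadj.symm⟩
          · rw [hXdef, Finset.mem_filter]; exact ⟨Finset.mem_univ _, hv0⟩
          · rw [hYdef, Finset.mem_filter]
            exact ⟨Finset.mem_univ _, by rw [← hv0]; exact hne⟩
  have hmissle : missing.card ≤ m - 2 := by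
    have h3 : (m : ℤ) ^ 2 - (m : ℤ) + 2 ≤ (adjacent.card : ℤ) := by
      rw [← hScard]; exact hedges
    have h1 : (adjacent.card : ℤ) + (missing.card : ℤ) = (m : ℤ) * m := by
      exact_mod_cast hcardsum
    obtain ⟨q, hq⟩ : ∃ q : ℤ, (m : ℤ) * m = q := ⟨_, rfl⟩
    rw [hq] at h1
    rw [sq, hq] at h3
    omega
  obtain ⟨l, hf1, hf2, hf3, hf4, hin, hch, hwr⟩ :=
    exists_pcyc G m X Y hm2 hXcard hYcard hdisj hmissle
  have hllen : l.length = m := by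
    have h1 : (l.map Prod.fst).toFinset.card = (l.map Prod.fst).length :=
      List.toFinset_card_of_nodup hf1
    rw [hf3, hXcard, List.length_map] at h1
    omega
  have hcross : ∀ a, a ∈ l.map Prod.fst → a ∈ l.map Prod.snd → False := by
    intro a ha hb
    exact Finset.disjoint_left.mp hdisj (hf3 ▸ List.mem_toFinset.mpr ha)
      (hf4 ▸ List.mem_toFinset.mpr hb)
  obtain ⟨v, c, hc⟩ := hamCycle_of_list (G := G) (toV l)
    (by rw [length_toV, hllen]; omega)
    (nodup_toV l hf1 hf2 hcross)
    (by
      intro v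
      rw [mem_toV]
      by_cases hv : v.1 = i0
      · exact Or.inl (List.mem_toFinset.mp (hf3 ▸ (by
          rw [hXdef, Finset.mem_filter]; exact ⟨Finset.mem_univ _, hv⟩)))
      · exact Or.inr (List.mem_toFinset.mp (hf4 ▸ (by
          rw [hYdef, Finset.mem_filter]; exact ⟨Finset.mem_univ _, hv⟩)))
      )
    (chain'_toV l hin hch)
    (by
      intro a ha b hb
      rw [getLast?_toV] at ha
      rw [head?_toV] at hb
      simp only [Option.mem_def, Option.map_eq_some_iff] at ha hb
      obtain ⟨pa, hpa, rfl⟩ := ha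
      obtain ⟨pb, hpb, rfl⟩ := hb
      exact hwr pa hpa pb hpb)
  exact ⟨v, c, hc⟩
end

section
/- For any integer a ≥ 5, let G be the 3-partite graph with part sizes (a, a − 2, 2) obtained from the complete 3-partite graph K(a, a − 2, 2) by choosing a − 2 vertices v_1, …, v_{a−2} in the part V_1 of size a and a vertex u in the part V_2 of size a − 2, and deleting the a − 2 edges v_i u for i = 1, …, a − 2. Then G is hamiltonian, G has at least (4 − 2p + 2n_1 + Σ n_i(p − n_i))/2 edges where p = 2a and (n_1, n_2, n_3) = (a, a − 2, 2), but G fails Pósa's condition: for r = a − 1 one has 1 ≤ r < p/2 and G has at least r vertices of degree at most r. -/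
open SimpleGraph

/-- The part (as an element of `Fin 3`) of a vertex of a tripartite vertex set. -/
def tripart {a b c : ℕ} : Fin a ⊕ Fin b ⊕ Fin c → Fin 3
  | Sum.inl _ => 0
  | Sum.inr (Sum.inl _) => 1
  | Sum.inr (Sum.inr _) => 2

/-- The complete tripartite graph `K(a, b, c)`: two vertices are adjacent iff they lie in
different parts. -/
def completeTripartite (a b c : ℕ) : SimpleGraph (Fin a ⊕ Fin b ⊕ Fin c) where
  Adj x y := tripart x ≠ tripart y
  symm := ⟨fun _ _ h => Ne.symm h⟩
  loopless := ⟨fun _ h => h rfl⟩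

instance {a b c : ℕ} : DecidableRel (completeTripartite a b c).Adj :=
  fun x y => inferInstanceAs (Decidable (tripart x ≠ tripart y))

private lemma ncard_range_fin {n : ℕ} {β : Type*} (f : Fin n → β) (hf : Function.Injective f) :
    (Set.range f).ncard = n := by
  rw [← Nat.card_coe_set_eq, Nat.card_range_of_injective hf, Nat.card_eq_fintype_card,
    Fintype.card_fin]

private lemma mod_consec (m i j : ℕ) (hm : 0 < m) (hi : i < m) (hj : j < m)
    (h : (m - j + i) % m = 1) : i = j + 1 ∨ (j = m - 1 ∧ i = 0) := by
  have hd := Nat.div_add_mod (m - j + i) m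
  rw [h] at hd
  have hq : (m - j + i) / m < 2 := Nat.div_lt_of_lt_mul (by omega)
  set q := (m - j + i) / m with hqdef
  interval_cases q <;> omega



private lemma cyc_adj (n k : ℕ) (h : k + 1 < n + 3) :
    (cycleGraph (n+3)).Adj ⟨k+1, h⟩ ⟨k, by omega⟩ := by
  rw [cycleGraph_adj']
  left
  rw [Fin.sub_def]
  show ((n + 3 - k) + (k + 1)) % (n+3) = 1
  have h2 : (n + 3 - k) + (k + 1) = (n+3) + 1 := by omega
  rw [h2, Nat.add_mod_left, Nat.mod_eq_of_lt (by omega)]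

def descWalk (n : ℕ) : (k : ℕ) → (h : k < n + 3) → (cycleGraph (n+3)).Walk ⟨k, h⟩ ⟨0, by omega⟩
  | 0, _ => Walk.nil
  | (k+1), h => Walk.cons (cyc_adj n k h) (descWalk n k (by omega))

lemma descWalk_mem_support (n : ℕ) : ∀ (k : ℕ) (h : k < n + 3) (x : Fin (n+3)),
    x ∈ (descWalk n k h).support ↔ x.val ≤ k := by
  intro k
  induction k with
  | zero => intro h x; simp only [descWalk, Walk.support_nil, List.mem_singleton, Fin.ext_iff]; omega
  | succ k ih =>
    intro h x
    simp only [descWalk, Walk.support_cons, List.mem_cons, ih (by omega) x, Fin.ext_iff]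
    omega

lemma descWalk_nodup (n : ℕ) : ∀ (k : ℕ) (h : k < n + 3), (descWalk n k h).support.Nodup := by
  intro k
  induction k with
  | zero => intro h; simp [descWalk]
  | succ k ih =>
    intro h
    simp only [descWalk, Walk.support_cons, List.nodup_cons]
    refine ⟨fun hc => ?_, ih (by omega)⟩
    rw [descWalk_mem_support] at hc
    simp at hc

lemma descWalk_edge_notmem (n : ℕ) : ∀ (k : ℕ) (h : k < n + 3) (h0 : (0:ℕ) < n + 3)
    (h2 : n + 2 < n + 3), s((⟨0, h0⟩ : Fin (n+3)), ⟨n+2, h2⟩) ∉ (descWalk n k h).edges := by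
  intro k
  induction k with
  | zero => intro h h0 h2; simp [descWalk]
  | succ k ih =>
    intro h h0 h2
    simp only [descWalk, Walk.edges_cons, List.mem_cons]
    rintro (hc | hc)
    · rw [Sym2.eq_iff] at hc
      rcases hc with ⟨h1, h2'⟩ | ⟨h1, h2'⟩ <;> simp [Fin.ext_iff] at h1 h2' <;> omega
    · exact ih (by omega) h0 h2 hc

lemma cycleGraph_isHamiltonian (m : ℕ) (hm : 3 ≤ m) : (cycleGraph m).IsHamiltonian := by
  obtain ⟨n, rfl⟩ : ∃ n, m = n + 3 := ⟨m - 3, by omega⟩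
  intro _
  have h0 : (0:ℕ) < n + 3 := by omega
  have h2 : n + 2 < n + 3 := by omega
  have hadj : (cycleGraph (n+3)).Adj ⟨0, h0⟩ ⟨n+2, h2⟩ := by
    rw [cycleGraph_adj']
    left
    rw [Fin.sub_def]
    show ((n + 3 - (n+2)) + 0) % (n+3) = 1
    have h3 : (n + 3 - (n+2)) + 0 = 1 := by omega
    rw [h3, Nat.mod_eq_of_lt (by omega)]
  refine ⟨⟨0, h0⟩, Walk.cons hadj (descWalk n (n+2) h2), ?_⟩
  rw [Walk.isHamiltonianCycle_iff_isCycle_and_support_count_tail_eq_one]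
  constructor
  · rw [Walk.cons_isCycle_iff]
    refine ⟨Walk.IsPath.mk' (descWalk_nodup n (n+2) h2), descWalk_edge_notmem n (n+2) h2 h0 h2⟩
  · intro x
    rw [Walk.support_cons, List.tail_cons]
    exact List.count_eq_one_of_mem (descWalk_nodup n (n+2) h2)
      ((descWalk_mem_support n (n+2) h2 x).2 (by omega))

lemma hamiltonian_of_bij {α β : Type*} [DecidableEq α] [DecidableEq β] [Fintype α] [Fintype β]
    {G : SimpleGraph α} {H : SimpleGraph β} (f : G →g H) (hf : Function.Bijective f)
    (hG : G.IsHamiltonian) : H.IsHamiltonian := by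
  intro hcard
  obtain ⟨a, p, hp⟩ := hG (by rwa [Fintype.card_of_bijective hf])
  exact ⟨f a, p.map f, hp.map hf⟩

/-- Remark, family 1, `p` even and `n₁ = p/2`: For `a ≥ 5`, let `G` be
obtained from `K(a, a−2, 2)` by choosing `a − 2` distinct vertices `vs 0, …, vs (a−3)` in the
part `V₁` of size `a` and a vertex `u` in the part `V₂` of size `a − 2`, and deleting the
`a − 2` edges `(vs i)u`. Then `G` is hamiltonian, `G` has at least
`(4 − 2p + 2n₁ + Σᵢ nᵢ(p − nᵢ))/2` edges where `p = 2a` and `(n₁, n₂, n₃) = (a, a−2, 2)`,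
but `G` fails Pósa's condition: for `r = a − 1` one has `1 ≤ r < p/2` and `G` has at least `r`
vertices of degree at most `r`. -/
theorem tripartite_posa_fail_even_half
    (a : ℕ) (ha : 5 ≤ a)
    (vs : Fin (a - 2) → Fin a) (hinj : Function.Injective vs)
    (u : Fin (a - 2))
    (G : SimpleGraph (Fin a ⊕ Fin (a - 2) ⊕ Fin 2))
    (hGdef : G = (completeTripartite a (a - 2) 2).deleteEdges
      {e | ∃ i, e = s(Sum.inl (vs i), Sum.inr (Sum.inl u))}) :
    G.IsHamiltonian ∧
      (4 - 2 * (2 * (a : ℤ)) + 2 * (a : ℤ) +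
          ((a : ℤ) * (2 * (a : ℤ) - a) + ((a : ℤ) - 2) * (2 * (a : ℤ) - ((a : ℤ) - 2)) +
            2 * (2 * (a : ℤ) - 2)) ≤ 2 * (G.edgeSet.ncard : ℤ)) ∧
      (1 ≤ a - 1 ∧ 2 * (a - 1) < 2 * a ∧
        a - 1 ≤ {x | (G.neighborSet x).ncard ≤ a - 1}.ncard) := by
  classical
  subst hGdef
  set ds : Set (Sym2 (Fin a ⊕ Fin (a - 2) ⊕ Fin 2)) :=
    {e | ∃ i, e = s(Sum.inl (vs i), Sum.inr (Sum.inl u))} with hds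
  have hadj_iff : ∀ p q, (completeTripartite a (a-2) 2).Adj p q ↔ tripart p ≠ tripart q :=
    fun _ _ => Iff.rfl
  -- the two vertices of V₁ not hit by vs
  obtain ⟨w0, w1, hw01, hwset⟩ : ∃ w0 w1, w0 ≠ w1 ∧
      (Finset.univ \ Finset.image vs Finset.univ : Finset (Fin a)) = {w0, w1} := by
    apply Finset.card_eq_two.mp
    rw [Finset.card_sdiff_of_subset (Finset.subset_univ _), Finset.card_image_of_injective _ hinj]
    simp only [Finset.card_univ, Fintype.card_fin]
    omega
  have hw0 : w0 ∉ Set.range vs := by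
    have : w0 ∈ (Finset.univ \ Finset.image vs Finset.univ : Finset (Fin a)) := by
      rw [hwset]; simp
    simp only [Finset.mem_sdiff, Finset.mem_image] at this
    rintro ⟨i, rfl⟩
    exact this.2 ⟨i, Finset.mem_univ i, rfl⟩
  have hw1 : w1 ∉ Set.range vs := by
    have : w1 ∈ (Finset.univ \ Finset.image vs Finset.univ : Finset (Fin a)) := by
      rw [hwset]; simp
    simp only [Finset.mem_sdiff, Finset.mem_image] at this
    rintro ⟨i, rfl⟩
    exact this.2 ⟨i, Finset.mem_univ i, rfl⟩
  -- the labelling equivalences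
  have hacast : a = (a - 2) + 2 := by omega
  let ey : Fin a ≃ (Fin (a-2) ⊕ Fin 2) := (finCongr hacast).trans finSumFinEquiv.symm
  let z0 : Fin a := ⟨0, by omega⟩
  let z1 : Fin a := ⟨1, by omega⟩
  let y : Fin a ≃ (Fin (a-2) ⊕ Fin 2) := ey.trans (Equiv.swap (ey z0) (Sum.inl u))
  have hy0 : y z0 = Sum.inl u := by
    simp only [y, Equiv.trans_apply, Equiv.swap_apply_left]
  have hyu : ∀ i : Fin a, y i = Sum.inl u → i = z0 :=
    fun i h => y.injective (h.trans hy0.symm)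
  have hz01 : z0 ≠ z1 := by simp [z0, z1, Fin.ext_iff]
  let σ : Equiv.Perm (Fin a) := Equiv.swap z0 w0
  let x : Equiv.Perm (Fin a) := σ.trans (Equiv.swap (σ z1) w1)
  have hσ0 : σ z0 = w0 := Equiv.swap_apply_left _ _
  have hx0 : x z0 = w0 := by
    simp only [x, Equiv.trans_apply, hσ0]
    refine Equiv.swap_apply_of_ne_of_ne ?_ hw01
    rw [← hσ0]
    exact fun h => hz01 (σ.injective h)
  have hx1 : x z1 = w1 := by
    simp only [x, Equiv.trans_apply, Equiv.swap_apply_left]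
  have hxnot : ∀ i : Fin a, (i : ℕ) ≤ 1 → x i ∉ Set.range vs := by
    intro i hi
    have : (i : ℕ) = 0 ∨ (i : ℕ) = 1 := by omega
    rcases this with h | h
    · have : i = z0 := by rw [Fin.ext_iff]; exact h
      rw [this, hx0]; exact hw0
    · have : i = z1 := by rw [Fin.ext_iff]; exact h
      rw [this, hx1]; exact hw1
  -- the cyclic labelling
  let F : Fin (2*a) → (Fin a ⊕ Fin (a-2) ⊕ Fin 2) := fun k =>
    if (k : ℕ) % 2 = 0 then Sum.inl (x ⟨(k : ℕ) / 2, by have := k.isLt; omega⟩)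
    else Sum.inr (y ⟨(k : ℕ) / 2, by have := k.isLt; omega⟩)
  have hFinj : Function.Injective F := by
    intro k1 k2 h
    have h1 := k1.isLt; have h2 := k2.isLt
    by_cases p1 : (k1 : ℕ) % 2 = 0 <;> by_cases p2 : (k2 : ℕ) % 2 = 0 <;>
        simp only [F, if_pos, if_neg, p1, p2, ite_true, ite_false] at h
    all_goals first
      | simp only [reduceCtorEq] at h
      | (rw [Fin.ext_iff]
         first
           | (have hx' := x.injective (Sum.inl.inj h); rw [Fin.mk.injEq] at hx'; omega)
           | (have hy' := y.injective (Sum.inr.inj h); rw [Fin.mk.injEq] at hy'; omega))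
  have hFsurj : Function.Surjective F := by
    rintro (w | z)
    · refine ⟨⟨2 * (x.symm w).val, by have := (x.symm w).isLt; omega⟩, ?_⟩
      have hp : ((⟨2 * (x.symm w).val, by have := (x.symm w).isLt; omega⟩ : Fin (2*a)) : ℕ) % 2 = 0 := by
        show 2 * (x.symm w).val % 2 = 0
        omega
      simp only [F, if_pos hp]
      congr 1
      have he : (⟨((⟨2 * (x.symm w).val, by have := (x.symm w).isLt; omega⟩ : Fin (2*a)) : ℕ) / 2,
          by have := (x.symm w).isLt; omega⟩ : Fin a) = x.symm w := by
        rw [Fin.ext_iff]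
        show 2 * (x.symm w).val / 2 = (x.symm w).val
        omega
      rw [he]; exact x.apply_symm_apply w
    · refine ⟨⟨2 * (y.symm z).val + 1, by have := (y.symm z).isLt; omega⟩, ?_⟩
      have hp : ¬ ((⟨2 * (y.symm z).val + 1, by have := (y.symm z).isLt; omega⟩ : Fin (2*a)) : ℕ) % 2 = 0 := by
        show ¬ (2 * (y.symm z).val + 1) % 2 = 0
        omega
      simp only [F, if_neg hp]
      congr 1
      have he : (⟨((⟨2 * (y.symm z).val + 1, by have := (y.symm z).isLt; omega⟩ : Fin (2*a)) : ℕ) / 2,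
          by have := (y.symm z).isLt; omega⟩ : Fin a) = y.symm z := by
        rw [Fin.ext_iff]
        show (2 * (y.symm z).val + 1) / 2 = (y.symm z).val
        omega
      rw [he]; exact y.apply_symm_apply z
  have adjGen : ∀ (xv : Fin a) (yv : Fin (a-2) ⊕ Fin 2),
      (yv = Sum.inl u → xv ∉ Set.range vs) →
      ((completeTripartite a (a-2) 2).deleteEdges ds).Adj (Sum.inl xv) (Sum.inr yv) := by
    intro xv yv hcond
    rw [SimpleGraph.deleteEdges_adj]
    constructor
    · show tripart (Sum.inl xv) ≠ tripart (Sum.inr yv)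
      rcases yv with z | z <;> simp [tripart] <;> try decide
    · rintro ⟨i, hi⟩
      rw [Sym2.eq_iff] at hi
      rcases hi with ⟨hA, hB⟩ | ⟨hA, hB⟩
      · have hyv : yv = Sum.inl u := Sum.inr.inj hB
        have hxv : xv = vs i := Sum.inl.inj hA
        exact hcond hyv ⟨i, hxv.symm⟩
      · exact absurd hA (by simp)
  have key : ∀ i j : Fin (2*a), ((j : ℕ) = (i : ℕ) + 1 ∨ ((j : ℕ) = 0 ∧ (i : ℕ) = 2*a - 1)) →
      ((completeTripartite a (a-2) 2).deleteEdges ds).Adj (F i) (F j) := by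
    intro i j hij
    have hi2 := i.isLt; have hj2 := j.isLt
    by_cases hp : (i : ℕ) % 2 = 0
    · have hj : (j : ℕ) = (i : ℕ) + 1 := by omega
      have hjodd : ¬ (j : ℕ) % 2 = 0 := by omega
      simp only [F, if_pos hp, if_neg hjodd]
      apply adjGen
      intro hyu'
      have hz : (⟨(j : ℕ)/2, by omega⟩ : Fin a) = z0 := hyu _ hyu'
      rw [Fin.mk.injEq] at hz
      have : (⟨(j : ℕ)/2, by omega⟩ : Fin a) = (⟨(i : ℕ)/2, by omega⟩ : Fin a) := by
        rw [Fin.mk.injEq]; omega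
      apply hxnot
      show (i : ℕ)/2 ≤ 1
      have hz0 : (z0 : ℕ) = 0 := rfl
      omega
    · rcases hij with hj | ⟨hj0, hi'⟩
      · have hjeven : (j : ℕ) % 2 = 0 := by omega
        simp only [F, if_neg hp, if_pos hjeven]
        refine (adjGen _ _ ?_).symm
        intro hyu'
        have hz : (⟨(i : ℕ)/2, by omega⟩ : Fin a) = z0 := hyu _ hyu'
        rw [Fin.mk.injEq] at hz
        apply hxnot
        show (j : ℕ)/2 ≤ 1
        have hz0 : (z0 : ℕ) = 0 := rfl
        omega
      · have hjeven : (j : ℕ) % 2 = 0 := by omega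
        simp only [F, if_neg hp, if_pos hjeven]
        refine (adjGen _ _ ?_).symm
        intro _
        apply hxnot
        show (j : ℕ)/2 ≤ 1
        omega
  have hmap : ∀ i j : Fin (2*a), (cycleGraph (2*a)).Adj i j →
      ((completeTripartite a (a-2) 2).deleteEdges ds).Adj (F i) (F j) := by
    intro i j hadj
    rw [cycleGraph_adj'] at hadj
    have hi2 := i.isLt; have hj2 := j.isLt
    rcases hadj with h | h
    · rw [Fin.sub_def] at h
      have := mod_consec (2*a) (i : ℕ) (j : ℕ) (by omega) hi2 hj2 h
      rcases this with h' | ⟨h1, h2⟩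
      · exact (key j i (Or.inl h')).symm
      · exact (key j i (Or.inr ⟨h2, h1⟩)).symm
    · rw [Fin.sub_def] at h
      have := mod_consec (2*a) (j : ℕ) (i : ℕ) (by omega) hj2 hi2 h
      rcases this with h' | ⟨h1, h2⟩
      · exact key i j (Or.inl h')
      · exact key i j (Or.inr ⟨h2, h1⟩)
  have hHam : ((completeTripartite a (a-2) 2).deleteEdges ds).IsHamiltonian :=
    hamiltonian_of_bij ⟨F, fun {i j} h => hmap i j h⟩ ⟨hFinj, hFsurj⟩
      (cycleGraph_isHamiltonian (2*a) (by omega))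
  have hcardV : Nat.card (Fin a ⊕ Fin (a-2) ⊕ Fin 2) = 2*a := by
    rw [Nat.card_sum, Nat.card_sum, Nat.card_eq_fintype_card, Nat.card_eq_fintype_card,
      Nat.card_eq_fintype_card, Fintype.card_fin, Fintype.card_fin, Fintype.card_fin]
    omega
  refine ⟨hHam, ?_, ?_⟩
  · -- edge count
    have deg_eq : ∀ t, (completeTripartite a (a-2) 2).degree t
        = ((completeTripartite a (a-2) 2).neighborSet t).ncard := by
      intro t
      rw [SimpleGraph.degree, SimpleGraph.neighborFinset_def, Set.ncard_eq_toFinset_card']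
    have hns1 : ∀ v : Fin a, (completeTripartite a (a-2) 2).neighborSet (Sum.inl v)
        = (Set.range (Sum.inl : Fin a → Fin a ⊕ Fin (a-2) ⊕ Fin 2))ᶜ := by
      intro v
      ext w
      rcases w with w | w
      · simp [SimpleGraph.mem_neighborSet, hadj_iff, tripart]
      · rcases w with w | w <;>
          simp [SimpleGraph.mem_neighborSet, hadj_iff, tripart] <;> try decide
    have hns2 : ∀ v : Fin (a-2), (completeTripartite a (a-2) 2).neighborSet (Sum.inr (Sum.inl v))
        = (Set.range (fun w : Fin (a-2) => (Sum.inr (Sum.inl w) : Fin a ⊕ Fin (a-2) ⊕ Fin 2)))ᶜ := by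
      intro v
      ext w
      rcases w with w | w
      · simp [SimpleGraph.mem_neighborSet, hadj_iff, tripart]; try decide
      · rcases w with w | w <;>
          simp [SimpleGraph.mem_neighborSet, hadj_iff, tripart] <;> try decide
    have hns3 : ∀ v : Fin 2, (completeTripartite a (a-2) 2).neighborSet (Sum.inr (Sum.inr v))
        = (Set.range (fun w : Fin 2 => (Sum.inr (Sum.inr w) : Fin a ⊕ Fin (a-2) ⊕ Fin 2)))ᶜ := by
      intro v
      ext w
      rcases w with w | w
      · simp [SimpleGraph.mem_neighborSet, hadj_iff, tripart]; try decide
      · rcases w with w | w <;>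
          simp [SimpleGraph.mem_neighborSet, hadj_iff, tripart] <;> try decide
    have hdeg1 : ∀ v : Fin a, (completeTripartite a (a-2) 2).degree (Sum.inl v) = a := by
      intro v
      have h1 := Set.ncard_add_ncard_compl
        (Set.range (Sum.inl : Fin a → Fin a ⊕ Fin (a-2) ⊕ Fin 2))
      rw [ncard_range_fin _ Sum.inl_injective, hcardV] at h1
      rw [deg_eq, hns1 v]
      omega
    have hdeg2 : ∀ v : Fin (a-2), (completeTripartite a (a-2) 2).degree (Sum.inr (Sum.inl v))
        = a + 2 := by
      intro v
      have h1 := Set.ncard_add_ncard_compl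
        (Set.range (fun w : Fin (a-2) => (Sum.inr (Sum.inl w) : Fin a ⊕ Fin (a-2) ⊕ Fin 2)))
      rw [ncard_range_fin (fun w : Fin (a-2) => (Sum.inr (Sum.inl w) : Fin a ⊕ Fin (a-2) ⊕ Fin 2)) (fun i j h => by simpa using h), hcardV] at h1
      rw [deg_eq, hns2 v]
      omega
    have hdeg3 : ∀ v : Fin 2, (completeTripartite a (a-2) 2).degree (Sum.inr (Sum.inr v))
        = 2*a - 2 := by
      intro v
      have h1 := Set.ncard_add_ncard_compl
        (Set.range (fun w : Fin 2 => (Sum.inr (Sum.inr w) : Fin a ⊕ Fin (a-2) ⊕ Fin 2)))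
      rw [ncard_range_fin (fun w : Fin 2 => (Sum.inr (Sum.inr w) : Fin a ⊕ Fin (a-2) ⊕ Fin 2)) (fun i j h => by simpa using h), hcardV] at h1
      rw [deg_eq, hns3 v]
      omega
    have hsum := SimpleGraph.sum_degrees_eq_twice_card_edges (completeTripartite a (a-2) 2)
    rw [Fintype.sum_sum_type] at hsum
    rw [Fintype.sum_sum_type] at hsum
    simp only [hdeg1, hdeg2, hdeg3, Finset.sum_const, Finset.card_univ, Fintype.card_fin,
      smul_eq_mul] at hsum
    -- hsum : a * a + ((a-2) * (a+2) + 2 * (2*a-2)) = 2 * #edgeFinset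
    have hKe : (completeTripartite a (a-2) 2).edgeSet.ncard
        = (completeTripartite a (a-2) 2).edgeFinset.card := by
      rw [← SimpleGraph.coe_edgeFinset, Set.ncard_coe_finset]
    have hdsub : ds ⊆ (completeTripartite a (a-2) 2).edgeSet := by
      rintro e ⟨i, rfl⟩
      rw [SimpleGraph.mem_edgeSet]
      show tripart (Sum.inl (vs i) : Fin a ⊕ Fin (a-2) ⊕ Fin 2) ≠ tripart (Sum.inr (Sum.inl u))
      simp [tripart]
    have hdscard : ds.ncard = a - 2 := by
      have : ds = Set.range (fun i =>
          s(Sum.inl (vs i), (Sum.inr (Sum.inl u) : Fin a ⊕ Fin (a-2) ⊕ Fin 2))) := by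
        ext e
        simp only [hds, Set.mem_setOf_eq, Set.mem_range, eq_comm]
      rw [this]
      apply ncard_range_fin
      intro i j hij
      rw [Sym2.eq_iff] at hij
      rcases hij with ⟨hA, _⟩ | ⟨hA, _⟩
      · exact hinj (Sum.inl.inj hA)
      · exact absurd hA (by simp)
    have hdiff : ((completeTripartite a (a-2) 2).deleteEdges ds).edgeSet.ncard
        = (completeTripartite a (a-2) 2).edgeSet.ncard - ds.ncard := by
      rw [SimpleGraph.edgeSet_deleteEdges, Set.ncard_diff hdsub]
    have hle : ds.ncard ≤ (completeTripartite a (a-2) 2).edgeSet.ncard :=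
      Set.ncard_le_ncard hdsub
    -- pass to ℤ
    have hsumZ : (a : ℤ) * a + (((a : ℤ) - 2) * ((a : ℤ) + 2) + 2 * (2 * (a : ℤ) - 2))
        = 2 * ((completeTripartite a (a-2) 2).edgeFinset.card : ℤ) := by
      have h2a : (2 : ℕ) ≤ a := by omega
      have h2a' : (2 : ℕ) ≤ 2 * a := by omega
      zify [h2a, h2a'] at hsum
      linarith [hsum]
    have hdiffZ : (((completeTripartite a (a-2) 2).deleteEdges ds).edgeSet.ncard : ℤ)
        = ((completeTripartite a (a-2) 2).edgeFinset.card : ℤ) - ((a : ℤ) - 2) := by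
      rw [hdiff, hdscard, hKe] at *
      omega
    refine le_of_eq ?_
    rw [hdiffZ]
    linarith [hsumZ]
  · refine ⟨by omega, by omega, ?_⟩
    set T : Set (Fin a ⊕ Fin (a-2) ⊕ Fin 2) :=
      {x | (((completeTripartite a (a-2) 2).deleteEdges ds).neighborSet x).ncard ≤ a - 1} with hT
    have hT1 : ∀ i, (Sum.inl (vs i) : Fin a ⊕ Fin (a-2) ⊕ Fin 2) ∈ T := by
      intro i
      have hsub : ((completeTripartite a (a-2) 2).deleteEdges ds).neighborSet (Sum.inl (vs i))
          ⊆ Sum.inr '' ({Sum.inl u}ᶜ) := by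
        intro w hw
        rw [SimpleGraph.mem_neighborSet, SimpleGraph.deleteEdges_adj] at hw
        obtain ⟨hadj, hnmem⟩ := hw
        rcases w with w | z
        · exact absurd rfl (hadj_iff _ _ |>.mp hadj)
        · refine ⟨z, ?_, rfl⟩
          intro hz
          rw [Set.mem_singleton_iff] at hz
          exact hnmem ⟨i, by rw [hz]⟩
      have hcA : (Sum.inr '' ({Sum.inl u}ᶜ) :
          Set (Fin a ⊕ Fin (a-2) ⊕ Fin 2)).ncard = a - 1 := by
        rw [Set.ncard_image_of_injective _ Sum.inr_injective]
        have h1 := Set.ncard_add_ncard_compl ({Sum.inl u} : Set (Fin (a-2) ⊕ Fin 2))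
        rw [Set.ncard_singleton] at h1
        have h2 : Nat.card (Fin (a-2) ⊕ Fin 2) = a := by
          rw [Nat.card_sum, Nat.card_eq_fintype_card, Nat.card_eq_fintype_card,
            Fintype.card_fin, Fintype.card_fin]
          omega
        omega
      show (((completeTripartite a (a-2) 2).deleteEdges ds).neighborSet (Sum.inl (vs i))).ncard
          ≤ a - 1
      calc (((completeTripartite a (a-2) 2).deleteEdges ds).neighborSet (Sum.inl (vs i))).ncard
          ≤ (Sum.inr '' ({Sum.inl u}ᶜ) : Set (Fin a ⊕ Fin (a-2) ⊕ Fin 2)).ncard :=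
            Set.ncard_le_ncard hsub (Set.toFinite _)
        _ = a - 1 := hcA
    have hT2 : (Sum.inr (Sum.inl u) : Fin a ⊕ Fin (a-2) ⊕ Fin 2) ∈ T := by
      have hsub : ((completeTripartite a (a-2) 2).deleteEdges ds).neighborSet
            (Sum.inr (Sum.inl u))
          ⊆ (Sum.inl '' (Set.range vs)ᶜ) ∪
            Set.range (fun z : Fin 2 => (Sum.inr (Sum.inr z) : Fin a ⊕ Fin (a-2) ⊕ Fin 2)) := by
        intro w hw
        rw [SimpleGraph.mem_neighborSet, SimpleGraph.deleteEdges_adj] at hw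
        obtain ⟨hadj, hnmem⟩ := hw
        rcases w with w | z
        · left
          refine ⟨w, ?_, rfl⟩
          rintro ⟨i, rfl⟩
          exact hnmem ⟨i, Sym2.eq_swap⟩
        · rcases z with z | z
          · exact absurd rfl (hadj_iff _ _ |>.mp hadj)
          · exact Or.inr ⟨z, rfl⟩
      have hc1 : ((Sum.inl '' (Set.range vs)ᶜ) :
          Set (Fin a ⊕ Fin (a-2) ⊕ Fin 2)).ncard = 2 := by
        rw [Set.ncard_image_of_injective _ Sum.inl_injective]
        have h1 := Set.ncard_add_ncard_compl (Set.range vs)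
        rw [ncard_range_fin _ hinj] at h1
        rw [Nat.card_eq_fintype_card, Fintype.card_fin] at h1
        omega
      have hc2 : (Set.range (fun z : Fin 2 =>
          (Sum.inr (Sum.inr z) : Fin a ⊕ Fin (a-2) ⊕ Fin 2))).ncard = 2 :=
        ncard_range_fin _ (fun i j h => by simpa using h)
      show (((completeTripartite a (a-2) 2).deleteEdges ds).neighborSet
          (Sum.inr (Sum.inl u))).ncard ≤ a - 1
      have hstep := Set.ncard_le_ncard hsub (Set.toFinite _)
      have hstep2 := Set.ncard_union_le ((Sum.inl '' (Set.range vs)ᶜ) :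
          Set (Fin a ⊕ Fin (a-2) ⊕ Fin 2))
        (Set.range (fun z : Fin 2 => (Sum.inr (Sum.inr z) : Fin a ⊕ Fin (a-2) ⊕ Fin 2)))
      omega
    have hSsub : (Set.range (fun i => (Sum.inl (vs i) : Fin a ⊕ Fin (a-2) ⊕ Fin 2)) ∪
        {Sum.inr (Sum.inl u)}) ⊆ T := by
      rintro w (⟨i, rfl⟩ | hw)
      · exact hT1 i
      · rw [Set.mem_singleton_iff] at hw
        rw [hw]
        exact hT2
    have hScard : (Set.range (fun i => (Sum.inl (vs i) : Fin a ⊕ Fin (a-2) ⊕ Fin 2)) ∪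
        {Sum.inr (Sum.inl u)}).ncard = (a - 2) + 1 := by
      rw [Set.ncard_union_eq ?_ (Set.toFinite _) (Set.toFinite _)]
      · rw [ncard_range_fin _ (fun i j h => hinj (Sum.inl.inj h)), Set.ncard_singleton]
      · rw [Set.disjoint_singleton_right]
        rintro ⟨i, h⟩
        exact absurd h (by simp)
    have hfin := Set.ncard_le_ncard hSsub (Set.toFinite T)
    omega
end

section
/- For any integer a ≥ 3, let G be the 3-partite graph with part sizes (a, a − 1, 2) obtained from the complete 3-partite graph K(a, a − 1, 2) by choosing a − 1 vertices v_1, …, v_{a−1} in the part V_1 of size a and a vertex u in the part V_2 of size a − 1, and deleting the a − 1 edges v_i u for i = 1, …, a − 1. Then G is hamiltonian, G has at least (4 − 2p + 2n_1 + Σ n_i(p − n_i))/2 edges where p = 2a + 1 and (n_1, n_2, n_3) = (a, a − 1, 2), but G fails Pósa's condition: for r = a one has 1 ≤ r < p/2 and G has at least r vertices of degree at most r. -/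
open SimpleGraph
open Fin.NatCast

section CyclicWalk
variable {V : Type*} {G : SimpleGraph V}

def cyclicWalk (g : ℕ → V) (hadj : ∀ k : ℕ, G.Adj (g (k+1)) (g k)) :
    (k : ℕ) → G.Walk (g k) (g 0)
  | 0 => SimpleGraph.Walk.nil
  | (k+1) => SimpleGraph.Walk.cons (hadj k) (cyclicWalk g hadj k)

lemma cyclicWalk_support (g : ℕ → V) (hadj : ∀ k : ℕ, G.Adj (g (k+1)) (g k)) (k : ℕ) :
    (cyclicWalk g hadj k).support = ((List.range (k+1)).reverse).map g := by
  induction k with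
  | zero => simp [cyclicWalk, List.range_succ]
  | succ k ih => simp [cyclicWalk, List.range_succ, ih]

lemma cyclicWalk_edges (g : ℕ → V) (hadj : ∀ k : ℕ, G.Adj (g (k+1)) (g k)) (k : ℕ) :
    (cyclicWalk g hadj k).edges
      = ((List.range k).reverse).map (fun i => s(g (i+1), g i)) := by
  induction k with
  | zero => simp [cyclicWalk]
  | succ k ih => simp [cyclicWalk, List.range_succ, ih]

lemma isHamiltonian_of_cyclic {V : Type*} [DecidableEq V] [Fintype V] {G : SimpleGraph V}
    {n : ℕ} [NeZero n] (hn : 3 ≤ n) (f : Fin n → V) (hb : Function.Bijective f)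
    (hadj : ∀ i : Fin n, G.Adj (f i) (f (i+1))) : G.IsHamiltonian := by
  set g : ℕ → V := fun k => f (k : Fin n) with hg
  have hmod : ∀ k : ℕ, k < n → ((k : Fin n) : ℕ) = k := fun k hk => by
    simp [Fin.val_natCast, Nat.mod_eq_of_lt hk]
  have ginj : ∀ i j : ℕ, i < n → j < n → g i = g j → i = j := by
    intro i j hi hj hij
    have h2 := congrArg Fin.val (hb.1 hij)
    rwa [hmod i hi, hmod j hj] at h2
  have hadj' : ∀ k : ℕ, G.Adj (g (k+1)) (g k) := by
    intro k
    have h1 : ((k+1 : ℕ) : Fin n) = (k : Fin n) + 1 := by push_cast; ring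
    have := (hadj (k : Fin n)).symm
    rwa [← h1] at this
  have hgn : g n = g 0 := by simp [hg]
  set q := cyclicWalk g hadj' (n-1) with hq
  have h₀ : G.Adj (g 0) (g (n-1)) := by
    have := hadj' (n-1)
    rw [show n-1+1 = n by omega, hgn] at this
    exact this
  set c := SimpleGraph.Walk.cons h₀ q with hc
  have hsup : q.support = ((List.range n).reverse).map g := by
    rw [hq, cyclicWalk_support, show n-1+1 = n by omega]
  have hnodup : q.support.Nodup := by
    rw [hsup]
    refine List.Nodup.map_on ?_ (List.nodup_reverse.2 List.nodup_range)
    intro i hi j hj hij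
    simp only [List.mem_reverse, List.mem_range] at hi hj
    exact ginj i j hi hj hij
  have hcyc : c.IsCycle := by
    rw [hc, SimpleGraph.Walk.cons_isCycle_iff]
    refine ⟨SimpleGraph.Walk.IsPath.mk' hnodup, ?_⟩
    rw [hq, cyclicWalk_edges]
    simp only [List.mem_map, List.mem_reverse, List.mem_range]
    rintro ⟨i, hi, hEq⟩
    rw [Sym2.eq_iff] at hEq
    rcases hEq with ⟨h1, h2⟩ | ⟨h1, h2⟩
    · have := ginj (i+1) 0 (by omega) (by omega) h1
      omega
    · have e1 := ginj (i+1) (n-1) (by omega) (by omega) h1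
      have e2 := ginj i 0 (by omega) (by omega) h2
      omega
  intro _
  refine ⟨g 0, c, ?_⟩
  rw [SimpleGraph.Walk.isHamiltonianCycle_iff_isCycle_and_support_count_tail_eq_one]
  refine ⟨hcyc, ?_⟩
  intro x
  have hx : ∃ i : ℕ, i < n ∧ g i = x := by
    obtain ⟨i, rfl⟩ := hb.2 x
    exact ⟨i.val, i.isLt, by simp [hg]⟩
  have htail : c.support.tail = q.support := by
    rw [hc, SimpleGraph.Walk.support_cons, List.tail_cons]
  rw [htail]
  refine List.count_eq_one_of_mem hnodup ?_
  obtain ⟨i, hi, rfl⟩ := hx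
  rw [hsup]
  simp only [List.mem_map, List.mem_reverse, List.mem_range]
  exact ⟨i, hi, rfl⟩
end CyclicWalk

def hamF {c : ℕ} (vs : Fin (c+2) → Fin (c+3)) (u : Fin (c+2)) (w : Fin (c+3)) :
    ℕ → (Fin (c+3) ⊕ Fin (c+2) ⊕ Fin 2)
  | 0 => .inr (.inr 0)
  | 1 => .inl w
  | 2 => .inr (.inl u)
  | 3 => .inr (.inr 1)
  | (m+4) => if m % 2 = 0 then .inl (vs ((m/2 : ℕ) : Fin (c+2)))
             else .inr (.inl (u.succAbove ((m/2 : ℕ) : Fin (c+1))))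

section
variable {c : ℕ} (vs : Fin (c+2) → Fin (c+3)) (u : Fin (c+2)) (w : Fin (c+3))

lemma hamF_even {m : ℕ} (hm : m % 2 = 0) :
    hamF vs u w (m+4) = .inl (vs ((m/2 : ℕ) : Fin (c+2))) := by
  show (if m % 2 = 0 then _ else _) = _
  rw [if_pos hm]

lemma hamF_odd {m : ℕ} (hm : m % 2 = 1) :
    hamF vs u w (m+4) = .inr (.inl (u.succAbove ((m/2 : ℕ) : Fin (c+1)))) := by
  show (if m % 2 = 0 then _ else _) = _
  rw [if_neg (by omega)]

lemma hamF_surj (hwall : ∀ x, x ≠ w → ∃ i, vs i = x) :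
    ∀ v : Fin (c+3) ⊕ Fin (c+2) ⊕ Fin 2, ∃ k : Fin (2*c+7), hamF vs u w k.val = v := by
  rintro (x | z | t)
  · by_cases hx : x = w
    · exact ⟨⟨1, by omega⟩, by simp [hamF, hx]⟩
    · obtain ⟨j, rfl⟩ := hwall x hx
      refine ⟨⟨2*j.val+4, by omega⟩, ?_⟩
      show hamF vs u w ((2*j.val)+4) = _
      rw [hamF_even _ _ _ (by omega)]
      rw [show (2*j.val)/2 = j.val by omega]
      simp
  · by_cases hz : z = u
    · exact ⟨⟨2, by omega⟩, by simp [hamF, hz]⟩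
    · obtain ⟨j, rfl⟩ := Fin.exists_succAbove_eq (Ne.symm (fun h => hz h.symm))
      refine ⟨⟨2*j.val+5, by omega⟩, ?_⟩
      show hamF vs u w ((2*j.val+1)+4) = _
      rw [hamF_odd _ _ _ (by omega)]
      rw [show (2*j.val+1)/2 = j.val by omega]
      simp
  · rcases t with ⟨tv, htv⟩
    interval_cases tv
    · exact ⟨⟨0, by omega⟩, by simp [hamF]⟩
    · exact ⟨⟨3, by omega⟩, by simp [hamF]⟩
end
section
variable {c : ℕ} (vs : Fin (c+2) → Fin (c+3)) (u : Fin (c+2)) (w : Fin (c+3))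
variable {G : SimpleGraph (Fin (c+3) ⊕ Fin (c+2) ⊕ Fin 2)}

lemma hamF_adj
    (hA1 : ∀ (x : Fin (c+3)) (z : Fin (c+2)), z ≠ u → G.Adj (.inl x) (.inr (.inl z)))
    (hA1w : ∀ z, G.Adj (.inl w) (.inr (.inl z)))
    (hA2 : ∀ (x : Fin (c+3)) (t : Fin 2), G.Adj (.inl x) (.inr (.inr t)))
    (hA3 : ∀ (z : Fin (c+2)) (t : Fin 2), G.Adj (.inr (.inl z)) (.inr (.inr t))) :
    ∀ k : ℕ, k < 2*c+7 →
      G.Adj (hamF vs u w k) (hamF vs u w ((k+1) % (2*c+7))) := by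
  intro k hk
  rcases k with (_|(_|(_|(_|m))))
  · rw [Nat.mod_eq_of_lt (by omega)]
    exact (hA2 w 0).symm
  · rw [Nat.mod_eq_of_lt (by omega)]
    exact hA1w u
  · rw [Nat.mod_eq_of_lt (by omega)]
    exact hA3 u 1
  · rw [Nat.mod_eq_of_lt (by omega)]
    show G.Adj (hamF vs u w 3) (hamF vs u w (0+4))
    rw [hamF_even _ _ _ (by omega)]
    exact (hA2 _ 1).symm
  · -- k = m + 4
    by_cases hlast : m = 2*c+2
    · subst hlast
      rw [show 2*c+2+4+1 = 2*c+7 by ring, Nat.mod_self]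
      show G.Adj (hamF vs u w ((2*c+2)+4)) (hamF vs u w 0)
      rw [hamF_even _ _ _ (by omega)]
      exact hA2 _ 0
    · have hm4 : m + 4 + 1 < 2*c+7 := by omega
      rw [Nat.mod_eq_of_lt hm4]
      show G.Adj (hamF vs u w (m+4)) (hamF vs u w ((m+1)+4))
      rcases Nat.mod_two_eq_zero_or_one m with he | ho
      · rw [hamF_even _ _ _ he, hamF_odd _ _ _ (by omega : (m+1) % 2 = 1)]
        rw [show (m+1)/2 = m/2 by omega]
        exact hA1 _ _ (Fin.succAbove_ne u _)
      · rw [hamF_odd _ _ _ ho, hamF_even _ _ _ (by omega : (m+1) % 2 = 0)]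
        exact (hA1 _ _ (Fin.succAbove_ne u _)).symm

lemma hamOf (hwall : ∀ x, x ≠ w → ∃ i, vs i = x)
    (hA1 : ∀ (x : Fin (c+3)) (z : Fin (c+2)), z ≠ u → G.Adj (.inl x) (.inr (.inl z)))
    (hA1w : ∀ z, G.Adj (.inl w) (.inr (.inl z)))
    (hA2 : ∀ (x : Fin (c+3)) (t : Fin 2), G.Adj (.inl x) (.inr (.inr t)))
    (hA3 : ∀ (z : Fin (c+2)) (t : Fin 2), G.Adj (.inr (.inl z)) (.inr (.inr t))) :
    G.IsHamiltonian := by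
  haveI : NeZero (2*c+7) := ⟨by omega⟩
  set f : Fin (2*c+7) → (Fin (c+3) ⊕ Fin (c+2) ⊕ Fin 2) := fun i => hamF vs u w i.val with hf
  have hsurj : Function.Surjective f := fun v => hamF_surj vs u w hwall v
  have hb : Function.Bijective f := by
    rw [Fintype.bijective_iff_surjective_and_card]
    refine ⟨hsurj, ?_⟩
    simp only [Fintype.card_sum, Fintype.card_fin]
    omega
  refine isHamiltonian_of_cyclic (by omega) f hb ?_
  intro i
  have h2 : ((1:ℕ) : Fin (2*c+7)) = 1 := Nat.cast_one
  have h3 : (1 : Fin (2*c+7)).val = 1 := by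
    rw [← h2, Fin.val_cast_of_lt (by omega)]
  have h1 : (i + 1).val = (i.val + 1) % (2*c+7) := by
    rw [Fin.val_add, h3]
  show G.Adj (hamF vs u w i.val) (hamF vs u w (i+1).val)
  rw [h1]
  exact hamF_adj vs u w hA1 hA1w hA2 hA3 i.val i.isLt
end



/-- Remark, family 2, `p` odd and `n₁ = (p−1)/2`: For `a ≥ 3`, let `G` be
obtained from `K(a, a−1, 2)` by choosing `a − 1` distinct vertices `vs 0, …, vs (a−2)` in the
part `V₁` of size `a` and a vertex `u` in the part `V₂` of size `a − 1`, and deleting the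
`a − 1` edges `(vs i)u`. Then `G` is hamiltonian, `G` has at least
`(4 − 2p + 2n₁ + Σᵢ nᵢ(p − nᵢ))/2` edges where `p = 2a + 1` and `(n₁, n₂, n₃) = (a, a−1, 2)`,
but `G` fails Pósa's condition: for `r = a` one has `1 ≤ r < p/2` and `G` has at least `r`
vertices of degree at most `r`. -/
theorem tripartite_posa_fail_odd_half
    (a : ℕ) (ha : 3 ≤ a)
    (vs : Fin (a - 1) → Fin a) (hinj : Function.Injective vs)
    (u : Fin (a - 1))
    (G : SimpleGraph (Fin a ⊕ Fin (a - 1) ⊕ Fin 2))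
    (hGdef : G = (completeTripartite a (a - 1) 2).deleteEdges
      {e | ∃ i, e = s(Sum.inl (vs i), Sum.inr (Sum.inl u))}) :
    G.IsHamiltonian ∧
      (4 - 2 * (2 * (a : ℤ) + 1) + 2 * (a : ℤ) +
          ((a : ℤ) * ((2 * (a : ℤ) + 1) - a) +
            ((a : ℤ) - 1) * ((2 * (a : ℤ) + 1) - ((a : ℤ) - 1)) +
            2 * ((2 * (a : ℤ) + 1) - 2)) ≤ 2 * (G.edgeSet.ncard : ℤ)) ∧
      (1 ≤ a ∧ 2 * a < 2 * a + 1 ∧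
        a ≤ {x | (G.neighborSet x).ncard ≤ a}.ncard) := by
  obtain ⟨c, rfl⟩ : ∃ c, a = c + 3 := ⟨a - 3, by omega⟩
  classical
  -- the unique vertex of `Fin (c+3)` missing from the range of `vs`
  have hvs_im : (Finset.image vs Finset.univ).card = c + 2 := by
    rw [Finset.card_image_of_injective _ hinj, Finset.card_univ, Fintype.card_fin]
    omega
  obtain ⟨w, hw⟩ : ∃ w : Fin (c+3), w ∉ Finset.image vs Finset.univ := by
    by_contra h
    push_neg at h
    have h2 : (Finset.image vs Finset.univ) = Finset.univ := Finset.eq_univ_iff_forall.2 h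
    rw [h2, Finset.card_univ, Fintype.card_fin] at hvs_im
    omega
  have hw' : ∀ i, vs i ≠ w := fun i hi =>
    hw (hi ▸ Finset.mem_image_of_mem vs (Finset.mem_univ i))
  have hwall : ∀ x : Fin (c+3), x ≠ w → ∃ i, vs i = x := by
    intro x hx
    have hins : insert w (Finset.image vs Finset.univ) = Finset.univ := by
      apply Finset.eq_univ_of_card
      rw [Finset.card_insert_of_notMem hw, hvs_im, Fintype.card_fin]
    have hx2 : x ∈ insert w (Finset.image vs Finset.univ) := hins ▸ Finset.mem_univ x
    rcases Finset.mem_insert.1 hx2 with h | h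
    · exact absurd h hx
    · obtain ⟨i, _, hi⟩ := Finset.mem_image.1 h
      exact ⟨i, hi⟩
  -- adjacency characterization
  have hAdj : ∀ x y, G.Adj x y ↔ (tripart x ≠ tripart y ∧
      ¬∃ i, s(x, y) = s(Sum.inl (vs i), Sum.inr (Sum.inl u))) := by
    subst hGdef
    intro x y
    rw [SimpleGraph.deleteEdges_adj]
    exact Iff.rfl
  clear hGdef
  have hA1 : ∀ (x : Fin (c+3)) (z : Fin (c+3-1)), z ≠ u →
      G.Adj (Sum.inl x) (Sum.inr (Sum.inl z)) := by
    intro x z hz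
    rw [hAdj]
    refine ⟨by simp [tripart], ?_⟩
    rintro ⟨i, hi⟩
    rw [Sym2.eq_iff] at hi
    rcases hi with ⟨-, h2⟩ | ⟨h1, -⟩
    · exact hz (by simpa using h2)
    · simp at h1
  have hA1w : ∀ z, G.Adj (Sum.inl w) (Sum.inr (Sum.inl z)) := by
    intro z
    rw [hAdj]
    refine ⟨by simp [tripart], ?_⟩
    rintro ⟨i, hi⟩
    rw [Sym2.eq_iff] at hi
    rcases hi with ⟨h1, -⟩ | ⟨h1, -⟩
    · exact hw' i (by simpa using h1.symm)
    · simp at h1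
  have hA2 : ∀ (x : Fin (c+3)) (t : Fin 2), G.Adj (Sum.inl x) (Sum.inr (Sum.inr t)) := by
    intro x t
    rw [hAdj]
    refine ⟨by simp [tripart], ?_⟩
    rintro ⟨i, hi⟩
    rw [Sym2.eq_iff] at hi
    rcases hi with ⟨-, h2⟩ | ⟨h1, -⟩
    · simp at h2
    · simp at h1
  have hA3 : ∀ (z : Fin (c+3-1)) (t : Fin 2),
      G.Adj (Sum.inr (Sum.inl z)) (Sum.inr (Sum.inr t)) := by
    intro z t
    rw [hAdj]
    refine ⟨by simp [tripart], ?_⟩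
    rintro ⟨i, hi⟩
    rw [Sym2.eq_iff] at hi
    rcases hi with ⟨h1, -⟩ | ⟨-, h2⟩
    · simp at h1
    · simp at h2
  have hNdel : ∀ i, ¬ G.Adj (Sum.inl (vs i)) (Sum.inr (Sum.inl u)) := by
    intro i h
    rw [hAdj] at h
    exact h.2 ⟨i, rfl⟩
  -- degree computations
  have hdeg1w : G.degree (Sum.inl w) = c + 4 := by
    have hnb : G.neighborFinset (Sum.inl w) = Finset.univ.image Sum.inr := by
      ext y
      rw [SimpleGraph.mem_neighborFinset]
      rcases y with x | (z | t)
      · simp [hAdj, tripart]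
      · simp [hA1w z]
      · simp [hA2 w t]
    rw [SimpleGraph.degree, hnb, Finset.card_image_of_injective _ Sum.inr_injective,
      Finset.card_univ, Fintype.card_sum, Fintype.card_fin, Fintype.card_fin]
    omega
  have hdeg1 : ∀ i, G.degree (Sum.inl (vs i)) = c + 3 := by
    intro i
    have hnb : G.neighborFinset (Sum.inl (vs i)) =
        (Finset.univ.erase u).image (fun z => Sum.inr (Sum.inl z)) ∪
          Finset.univ.image (fun t : Fin 2 => Sum.inr (Sum.inr t)) := by
      ext y
      rw [SimpleGraph.mem_neighborFinset]
      rcases y with x | (z | t)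
      · simp [hAdj, tripart]
      · simp only [Finset.mem_union, Finset.mem_image, Finset.mem_erase, Finset.mem_univ,
          true_and, and_true]
        constructor
        · intro h
          refine Or.inl ⟨z, ?_, rfl⟩
          rintro rfl
          exact hNdel i h
        · rintro (⟨z', hz', he⟩ | ⟨t, ht⟩)
          · obtain rfl : z' = z := by simpa using he
            exact hA1 _ _ hz'
          · simp at ht
      · simp only [Finset.mem_union, Finset.mem_image, Finset.mem_erase, Finset.mem_univ,
          true_and, and_true]
        constructor
        · intro _; exact Or.inr ⟨t, rfl⟩
        · intro _; exact hA2 _ _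
    rw [SimpleGraph.degree, hnb, Finset.card_union_of_disjoint (by
        simp [Finset.disjoint_left]),
      Finset.card_image_of_injective _ (fun a b h => by simpa using h),
      Finset.card_image_of_injective _ (fun a b h => by simpa using h),
      Finset.card_erase_of_mem (Finset.mem_univ u), Finset.card_univ, Finset.card_univ,
      Fintype.card_fin, Fintype.card_fin]
    omega
  have hdeg2u : G.degree (Sum.inr (Sum.inl u)) = 3 := by
    have hnb : G.neighborFinset (Sum.inr (Sum.inl u)) =
        {Sum.inl w, Sum.inr (Sum.inr 0), Sum.inr (Sum.inr 1)} := by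
      ext y
      rw [SimpleGraph.mem_neighborFinset]
      rcases y with x | (z | t)
      · simp only [Finset.mem_insert, Finset.mem_singleton]
        constructor
        · intro h
          by_contra hne
          push_neg at hne
          obtain ⟨i, rfl⟩ := hwall x (by simpa using hne.1)
          exact hNdel i h.symm
        · rintro (h | h | h)
          · obtain rfl : x = w := by simpa using h
            exact (hA1w u).symm
          · simp at h
          · simp at h
      · constructor
        · intro h
          rw [hAdj] at h
          simp [tripart] at h
        · intro h
          simp at h
      · simp only [Finset.mem_insert, Finset.mem_singleton]
        constructor
        · intro _
          rcases t with ⟨tv, htv⟩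
          interval_cases tv <;> simp
        · intro _
          exact hA3 u t
    rw [SimpleGraph.degree, hnb]
    rw [Finset.card_insert_of_notMem (by simp), Finset.card_insert_of_notMem (by simp),
      Finset.card_singleton]
  have hdeg2z : ∀ z, z ≠ u → G.degree (Sum.inr (Sum.inl z)) = c + 5 := by
    intro z hz
    have hnb : G.neighborFinset (Sum.inr (Sum.inl z)) =
        Finset.univ.image Sum.inl ∪
          Finset.univ.image (fun t : Fin 2 => Sum.inr (Sum.inr t)) := by
      ext y
      rw [SimpleGraph.mem_neighborFinset]
      rcases y with x | (z' | t)
      · simp [(hA1 x z hz).symm]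
      · simp only [Finset.mem_union, Finset.mem_image, Finset.mem_univ, true_and]
        constructor
        · intro h
          rw [hAdj] at h
          simp [tripart] at h
        · rintro (⟨x, hx⟩ | ⟨t, ht⟩) <;> simp_all
      · simp [hA3 z t]
    rw [SimpleGraph.degree, hnb, Finset.card_union_of_disjoint (by
        simp [Finset.disjoint_left]),
      Finset.card_image_of_injective _ Sum.inl_injective,
      Finset.card_image_of_injective _ (fun a b h => by simpa using h),
      Finset.card_univ, Finset.card_univ, Fintype.card_fin, Fintype.card_fin]
  have hdeg3 : ∀ t, G.degree (Sum.inr (Sum.inr t)) = 2*c + 5 := by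
    intro t
    have hnb : G.neighborFinset (Sum.inr (Sum.inr t)) =
        Finset.univ.image Sum.inl ∪
          Finset.univ.image (fun z : Fin (c+3-1) => Sum.inr (Sum.inl z)) := by
      ext y
      rw [SimpleGraph.mem_neighborFinset]
      rcases y with x | (z | t')
      · simp [(hA2 x t).symm]
      · simp [(hA3 z t).symm]
      · simp only [Finset.mem_union, Finset.mem_image, Finset.mem_univ, true_and]
        constructor
        · intro h
          rw [hAdj] at h
          simp [tripart] at h
        · rintro (⟨x, hx⟩ | ⟨z, hz⟩) <;> simp_all
    rw [SimpleGraph.degree, hnb, Finset.card_union_of_disjoint (by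
        simp [Finset.disjoint_left]),
      Finset.card_image_of_injective _ Sum.inl_injective,
      Finset.card_image_of_injective _ (fun a b h => by simpa using h),
      Finset.card_univ, Finset.card_univ, Fintype.card_fin, Fintype.card_fin]
    omega
  refine ⟨?_, ?_, ?_, ?_, ?_⟩
  · -- hamiltonian
    exact hamOf vs u w hwall hA1 hA1w hA2 hA3
  · -- edge count
    have hsum := SimpleGraph.sum_degrees_eq_twice_card_edges G
    rw [Fintype.sum_sum_type, Fintype.sum_sum_type] at hsum
    have hS1 : ∑ x : Fin (c+3), G.degree (Sum.inl x) = (c+4) + (c+2)*(c+3) := by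
      rw [← Finset.add_sum_erase _ _ (Finset.mem_univ w), hdeg1w]
      congr 1
      have hcg : ∀ x ∈ Finset.univ.erase w, G.degree (Sum.inl x) = c + 3 := by
        intro x hx
        obtain ⟨i, rfl⟩ := hwall x (Finset.ne_of_mem_erase hx)
        exact hdeg1 i
      rw [Finset.sum_congr rfl hcg, Finset.sum_const,
        Finset.card_erase_of_mem (Finset.mem_univ w), Finset.card_univ, Fintype.card_fin,
        smul_eq_mul]
      congr 1
    have hS2 : ∑ z : Fin (c+3-1), G.degree (Sum.inr (Sum.inl z)) = 3 + (c+1)*(c+5) := by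
      rw [← Finset.add_sum_erase _ _ (Finset.mem_univ u), hdeg2u]
      congr 1
      have hcg : ∀ z ∈ Finset.univ.erase u, G.degree (Sum.inr (Sum.inl z)) = c + 5 :=
        fun z hz => hdeg2z z (Finset.ne_of_mem_erase hz)
      rw [Finset.sum_congr rfl hcg, Finset.sum_const,
        Finset.card_erase_of_mem (Finset.mem_univ u), Finset.card_univ, Fintype.card_fin,
        smul_eq_mul]
      congr 1
    have hS3 : ∑ t : Fin 2, G.degree (Sum.inr (Sum.inr t)) = 2*(2*c+5) := by
      rw [Finset.sum_congr rfl (fun t _ => hdeg3 t), Finset.sum_const, Finset.card_univ,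
        Fintype.card_fin, smul_eq_mul]
    rw [hS1, hS2, hS3] at hsum
    have hE : G.edgeSet.ncard = G.edgeFinset.card := by
      rw [← SimpleGraph.coe_edgeFinset, Set.ncard_coe_finset]
    have hsum' : 2 * G.edgeFinset.card = 2*c^2 + 16*c + 28 := by
      rw [← hsum]
      ring
    have hfinal : 2 * (G.edgeSet.ncard : ℤ) = 2*(c:ℤ)^2 + 16*(c:ℤ) + 28 := by
      rw [hE]
      exact_mod_cast hsum'
    push_cast
    ring_nf
    ring_nf at hfinal
    linarith [hfinal]
  · omega
  · omega
  · -- Pósa failure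
    have hdeg_ncard : ∀ v, (G.neighborSet v).ncard = G.degree v := by
      intro v
      rw [← Nat.card_coe_set_eq, Nat.card_eq_fintype_card,
        SimpleGraph.card_neighborSet_eq_degree]
    have hsub : (Set.range (fun i => (Sum.inl (vs i) : Fin (c+3) ⊕ Fin (c+3-1) ⊕ Fin 2)))
        ∪ {Sum.inr (Sum.inl u)} ⊆ {x | (G.neighborSet x).ncard ≤ c+3} := by
      rintro x (⟨i, rfl⟩ | rfl)
      · simp only [Set.mem_setOf_eq, hdeg_ncard, hdeg1 i, le_refl]
      · simp only [Set.mem_setOf_eq, hdeg_ncard, hdeg2u]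
        omega
    have hcard : (Set.range (fun i => (Sum.inl (vs i) : Fin (c+3) ⊕ Fin (c+3-1) ⊕ Fin 2))
        ∪ {Sum.inr (Sum.inl u)}).ncard = c + 3 := by
      rw [Set.ncard_union_eq (by
          rw [Set.disjoint_left]
          rintro x ⟨i, rfl⟩ hx
          simp at hx)
        (Set.toFinite _) (Set.toFinite _)]
      rw [← Set.image_univ, Set.ncard_image_of_injective _
        (fun i j h => hinj (by simpa using h)), Set.ncard_univ, Nat.card_eq_fintype_card,
        Fintype.card_fin, Set.ncard_singleton]
      omega
    calc (c + 3 : ℕ) = _ := hcard.symm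
      _ ≤ _ := Set.ncard_le_ncard hsub (Set.toFinite _)
end
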